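/- arXiv:1208.5522 — 2 statements merged into one kernel-verified Lean document; each statement's English description precedes it below -/
import Mathlib

section
/- There exists a compact set X ⊆ ℝ such that lpdim X = 0, dpdim X = 1/2 and lbdim X = 1; in particular lpdim X < dpdim X < lbdim X. -/
open Filter MeasureTheory Set
open scoped ENNReal NNReal Topology

namespace ZPaper

variable {X : Type*} [MetricSpace X] {Y : Type*} [MetricSpace Y]

/-- The `δ`-capacity of a set `E`: the supremum of cardinalities of subsets of `E`
whose points are mutually more than `δ` apart. -/
noncomputable def capacity (δ : ℝ) (E : Set X) : ℝ≥0∞ :=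
  ⨆ (F : Finset X) (_ : ↑F ⊆ E ∧ ∀ x ∈ F, ∀ y ∈ F, x ≠ y → δ < dist x y),
    (F.card : ℝ≥0∞)

/-- Lower box (Minkowski) dimension: `liminf_{δ→0} log C_δ(E) / |log δ|`. -/
noncomputable def lbdim (E : Set X) : EReal :=
  Filter.liminf (fun δ : ℝ => (capacity δ E).log / ((|Real.log δ| : ℝ) : EReal)) (𝓝[>] (0:ℝ))

/-- Upper box (Minkowski) dimension: `limsup_{δ→0} log C_δ(E) / |log δ|`. -/
noncomputable def ubdim (E : Set X) : EReal :=
  Filter.limsup (fun δ : ℝ => (capacity δ E).log / ((|Real.log δ| : ℝ) : EReal)) (𝓝[>] (0:ℝ))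

/-- Upper packing dimension: infimum of `sup_n ubdim Eₙ` over countable covers of `E`. -/
noncomputable def updim (E : Set X) : EReal :=
  ⨅ (A : ℕ → Set X) (_ : E ⊆ ⋃ n, A n), ⨆ n, ubdim (A n)

/-- Lower packing dimension: infimum of `sup_n lbdim Eₙ` over countable covers of `E`. -/
noncomputable def lpdim (E : Set X) : EReal :=
  ⨅ (A : ℕ → Set X) (_ : E ⊆ ⋃ n, A n), ⨆ n, lbdim (A n)

/-- Directed lower packing dimension: infimum of `sup_n lbdim Eₙ` over increasing
sequences with union `E`. -/
noncomputable def dpdim (E : Set X) : EReal :=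
  ⨅ (A : ℕ → Set X) (_ : Monotone A ∧ (⋃ n, A n) = E), ⨆ n, lbdim (A n)

/-- A packing: a family of pairs (center, radius) with positive radii such that
`d(x_i, x_j) > r_i` for distinct members. -/
def IsPacking (π : Set (X × ℝ)) : Prop :=
  (∀ p ∈ π, 0 < p.2) ∧ ∀ p ∈ π, ∀ q ∈ π, p ≠ q → p.2 < dist p.1 q.1

/-- A packing of a set `E`: all centers belong to `E`. -/
def IsPackingOf (π : Set (X × ℝ)) (E : Set X) : Prop :=
  IsPacking π ∧ ∀ p ∈ π, p.1 ∈ E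

/-- A uniform packing: all radii equal. -/
def IsUniform (π : Set (X × ℝ)) : Prop := ∀ p ∈ π, ∀ q ∈ π, p.2 = q.2

/-- A scale: a set of positive reals with `0` in its closure. -/
def IsScale (Δ : Set ℝ) : Prop := Δ ⊆ Set.Ioi (0:ℝ) ∧ (0:ℝ) ∈ closure Δ

/-- A `(Δ,δ)`-packing of `E`: a packing of `E` with radii in `Δ ∩ (0, δ]`. -/
def IsScaledPacking (Δ : Set ℝ) (δ : ℝ) (π : Set (X × ℝ)) (E : Set X) : Prop :=
  IsPackingOf π E ∧ ∀ p ∈ π, p.2 ∈ Δ ∧ p.2 ≤ δ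

/-- `g(π) = Σ_i g(r_i)` for a packing `π`. -/
noncomputable def packVal (g : ℝ → ℝ) (π : Set (X × ℝ)) : ℝ≥0∞ :=
  ∑' p : π, ENNReal.ofReal (g p.1.2)

/-- `pack^g_{Δ,δ}(E) = sup{g(π) : π a (Δ,δ)-packing of E}`. -/
noncomputable def packPre (g : ℝ → ℝ) (Δ : Set ℝ) (δ : ℝ) (E : Set X) : ℝ≥0∞ :=
  ⨆ (π : Set (X × ℝ)) (_ : IsScaledPacking Δ δ π E), packVal g π

/-- `pack^g_{Δ,0}(E) = inf_{δ>0} pack^g_{Δ,δ}(E)`. -/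
noncomputable def packPre0 (g : ℝ → ℝ) (Δ : Set ℝ) (E : Set X) : ℝ≥0∞ :=
  ⨅ (δ : ℝ) (_ : 0 < δ), packPre g Δ δ E

/-- Uniform-packing (box) variant of `packPre`. -/
noncomputable def boxPre (g : ℝ → ℝ) (Δ : Set ℝ) (δ : ℝ) (E : Set X) : ℝ≥0∞ :=
  ⨆ (π : Set (X × ℝ)) (_ : IsScaledPacking Δ δ π E ∧ IsUniform π), packVal g π

/-- `boxm^g_{Δ,0}(E) = inf_{δ>0} boxm^g_{Δ,δ}(E)`. -/
noncomputable def boxPre0 (g : ℝ → ℝ) (Δ : Set ℝ) (E : Set X) : ℝ≥0∞ :=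
  ⨅ (δ : ℝ) (_ : 0 < δ), boxPre g Δ δ E

/-- Munroe's Method I construction. -/
noncomputable def methodI (τ : Set X → ℝ≥0∞) (E : Set X) : ℝ≥0∞ :=
  ⨅ (A : ℕ → Set X) (_ : E ⊆ ⋃ n, A n), ∑' n, τ (A n)

/-- The "directed" Method D construction. -/
noncomputable def methodD (τ : Set X → ℝ≥0∞) (E : Set X) : ℝ≥0∞ :=
  ⨅ (A : ℕ → Set X) (_ : Monotone A ∧ (⋃ n, A n) = E), ⨆ n, τ (A n)

/-- The `Δ`-packing measure `pack^g_Δ` (Method I of `pack^g_{Δ,0}`). -/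
noncomputable def packMeasure (g : ℝ → ℝ) (Δ : Set ℝ) : Set X → ℝ≥0∞ :=
  methodI (packPre0 g Δ)

/-- The `Δ`-box measure `boxm^g_Δ` (Method I of `boxm^g_{Δ,0}`). -/
noncomputable def boxMeasure (g : ℝ → ℝ) (Δ : Set ℝ) : Set X → ℝ≥0∞ :=
  methodI (boxPre0 g Δ)

/-- The upper packing pre-measure `upack^g_0 = pack^g_{(0,∞),0}`. -/
noncomputable def upackPre0 (g : ℝ → ℝ) : Set X → ℝ≥0∞ :=
  packPre0 g (Set.Ioi (0:ℝ))

/-- The upper packing (= packing) measure `upack^g`. -/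
noncomputable def upack (g : ℝ → ℝ) : Set X → ℝ≥0∞ :=
  methodI (upackPre0 g)

/-- The lower packing pre-measure `lpack^g_0(E) = inf_Δ pack^g_{Δ,0}(E)`. -/
noncomputable def lpackPre0 (g : ℝ → ℝ) (E : Set X) : ℝ≥0∞ :=
  ⨅ (Δ : Set ℝ) (_ : IsScale Δ), packPre0 g Δ E

/-- The lower packing measure `lpack^g`. -/
noncomputable def lpack (g : ℝ → ℝ) : Set X → ℝ≥0∞ :=
  methodI (lpackPre0 g)

/-- The directed lower packing set function `dpack^g` (Method D of `lpack^g_0`). -/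
noncomputable def dpack (g : ℝ → ℝ) : Set X → ℝ≥0∞ :=
  methodD (lpackPre0 g)

/-- The lower box (Hewitt–Stromberg) pre-measure `lboxm^g_0(E) = liminf_{δ→0} C_δ(E)·g(δ)`. -/
noncomputable def lboxPre0 (g : ℝ → ℝ) (E : Set X) : ℝ≥0∞ :=
  Filter.liminf (fun δ : ℝ => capacity δ E * ENNReal.ofReal (g δ)) (𝓝[>] (0:ℝ))

/-- The upper box pre-measure `uboxm^g_0(E) = limsup_{δ→0} C_δ(E)·g(δ)`. -/
noncomputable def uboxPre0 (g : ℝ → ℝ) (E : Set X) : ℝ≥0∞ :=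
  Filter.limsup (fun δ : ℝ => capacity δ E * ENNReal.ofReal (g δ)) (𝓝[>] (0:ℝ))

/-- The lower box (Hewitt–Stromberg) measure `lboxm^g`. -/
noncomputable def lbox (g : ℝ → ℝ) : Set X → ℝ≥0∞ := methodI (lboxPre0 g)

/-- The upper box measure `uboxm^g`. -/
noncomputable def ubox (g : ℝ → ℝ) : Set X → ℝ≥0∞ := methodI (uboxPre0 g)

/-- The directed lower box set function `dboxm^g` (Method D of `lboxm^g_0`). -/
noncomputable def dbox (g : ℝ → ℝ) : Set X → ℝ≥0∞ := methodD (lboxPre0 g)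

/-- A Hausdorff function: a nondecreasing positive function on `(0,∞)`. -/
def IsHausdorffFunction (g : ℝ → ℝ) : Prop :=
  MonotoneOn g (Set.Ioi (0:ℝ)) ∧ ∀ r : ℝ, 0 < r → 0 < g r

/-- `f ≺ g`: `lim_{r→0⁺} f(r)/g(r) = 0`. -/
def HPrec (f g : ℝ → ℝ) : Prop :=
  Tendsto (fun r => f r / g r) (𝓝[>] (0:ℝ)) (𝓝 0)

/-- The section `E_x = {y : (x,y) ∈ E}` of a set `E ⊆ X × Y`. -/
def sect (E : Set (X × Y)) (x : X) : Set Y := {y | (x, y) ∈ E}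

/-- The integral of a nonnegative function against a set function, via the usual
supremum over Borel simple functions (for a Borel measure this is the Lebesgue integral). -/
noncomputable def sLintegral (τ : Set X → ℝ≥0∞) (f : X → ℝ≥0∞) : ℝ≥0∞ :=
  letI := borel X
  ⨆ (s : SimpleFunc X ℝ≥0∞) (_ : ∀ x, s x ≤ f x), ∑ y ∈ s.range, y * τ (⇑s ⁻¹' {y})

/-- The upper integral `∫* f dτ = inf{∫ φ dτ : φ ≥ f Borel measurable}`. -/
noncomputable def upperIntegral (τ : Set X → ℝ≥0∞) (f : X → ℝ≥0∞) : ℝ≥0∞ :=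
  letI := borel X
  ⨅ (φ : X → ℝ≥0∞) (_ : ∀ x, f x ≤ φ x) (_ : Measurable φ), sLintegral τ φ

/-- `(Q,m)`-homogeneity of a set `A`: `C_r(E) ≤ Q (diam E / r)^m` for all `E ⊆ A`
and all `0 < r ≤ diam E`. -/
def IsHomog (Q m : ℝ) (A : Set X) : Prop :=
  ∀ E : Set X, E ⊆ A → ∀ r : ℝ, 0 < r → ENNReal.ofReal r ≤ EMetric.diam E →
    capacity r E ≤ ENNReal.ofReal Q * (EMetric.diam E / ENNReal.ofReal r) ^ m

/-- The Assouad dimension of a set. -/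
noncomputable def adim (A : Set X) : ℝ≥0∞ :=
  ⨅ (m : ℝ) (_ : 0 < m ∧ ∃ Q : ℝ, 0 ≤ Q ∧ IsHomog Q m A), ENNReal.ofReal m

/-- The countably stable modification of the Assouad dimension. -/
noncomputable def sadim (A : Set X) : ℝ≥0∞ :=
  ⨅ (S : ℕ → Set X) (_ : A ⊆ ⋃ n, S n), ⨆ n, adim (S n)

/-- The upper packing dimension of a Borel measure. -/
noncomputable def updimM {Z : Type*} [MetricSpace Z] [MeasurableSpace Z]
    (μ : Measure Z) : EReal :=
  ⨅ (E : Set Z) (_ : MeasurableSet[borel Z] E ∧ 0 < μ E), updim E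

/-- The lower packing dimension of a Borel measure. -/
noncomputable def lpdimM {Z : Type*} [MetricSpace Z] [MeasurableSpace Z]
    (μ : Measure Z) : EReal :=
  ⨅ (E : Set Z) (_ : MeasurableSet[borel Z] E ∧ 0 < μ E), lpdim E

/-- Euclidean space `ℝ^m`. -/
abbrev Euc (m : ℕ) := EuclideanSpace ℝ (Fin m)

end ZPaper
open Filter MeasureTheory Set ZPaper
open scoped ENNReal NNReal Topology


namespace S17

/-- Epoch boundaries. -/
def tau (t : ℕ) : ℕ := 2^(t^2)

lemma tau_mono : StrictMono tau := fun a b h =>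
  Nat.pow_lt_pow_right one_lt_two (by nlinarith)

lemma tau_monotone : Monotone tau := tau_mono.monotone

lemma tau_pos (t : ℕ) : 0 < tau t := Nat.pow_pos (by norm_num)

lemma lt_tau_self (t : ℕ) : t < tau t :=
  lt_of_lt_of_le (Nat.lt_two_pow_self (n := t)) (Nat.pow_le_pow_right (by norm_num) (Nat.le_self_pow (by omega) t))

lemma tau_zero : tau 0 = 1 := rfl

/-- The epoch of a scale `j`. -/
def ep (j : ℕ) : ℕ := Nat.findGreatest (fun t => tau t < j) j

lemma ep_spec {j : ℕ} (hj : 2 ≤ j) : tau (ep j) < j := by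
  unfold ep
  exact Nat.findGreatest_spec (P := fun t => tau t < j) (Nat.zero_le j)
    (show tau 0 < j by rw [tau_zero]; omega)

lemma ep_lt {j : ℕ} (hj : 2 ≤ j) : ep j < j := by
  rcases Nat.lt_or_ge (ep j) j with h | h
  · exact h
  · exfalso
    have h1 : ep j ≤ j := Nat.findGreatest_le j
    have h2 : ep j = j := le_antisymm h1 h
    have := ep_spec hj
    rw [h2] at this
    exact absurd this (not_lt.2 (lt_tau_self j).le)

lemma ep_ub {j : ℕ} (hj : 2 ≤ j) : j ≤ tau (ep j + 1) := by
  by_contra h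
  push_neg at h
  have h2 : ep j + 1 ≤ j := ep_lt hj
  exact Nat.findGreatest_is_greatest (P := fun t => tau t < j) (Nat.lt_succ_self _) h2 h

lemma ep_ge {j T : ℕ} (h : tau T < j) : T ≤ ep j :=
  Nat.le_findGreatest (le_of_lt (lt_trans (lt_tau_self T) h)) h

lemma ep_eq {j t : ℕ} (h1 : tau t < j) (h2 : j ≤ tau (t+1)) : ep j = t := by
  refine le_antisymm ?_ (ep_ge h1)
  by_contra h
  push_neg at h
  have : tau (t+1) ≤ tau (ep j) := tau_monotone h
  have hj2 : 2 ≤ j := by have := tau_pos t; omega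
  have := ep_spec hj2
  omega

lemma ep_tendsto : Filter.Tendsto ep Filter.atTop Filter.atTop := by
  refine Filter.tendsto_atTop.2 fun T => ?_
  refine Filter.eventually_atTop.2 ⟨tau T + 1, fun j hj => ep_ge (by omega)⟩

/-- Which piece dips in epoch `t`. -/
def rho (t : ℕ) : ℕ := padicValNat 2 t + 1

lemma rho_ne_succ {t : ℕ} (ht : 1 ≤ t) : rho t ≠ rho (t+1) := by
  unfold rho
  intro h
  have h' : padicValNat 2 t = padicValNat 2 (t+1) := by omega
  rcases Nat.even_or_odd t with he | ho
  · have h1 : padicValNat 2 (t+1) = 0 := padicValNat.eq_zero_of_not_dvd (by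
      rcases he with ⟨m, hm⟩; omega)
    have h2 : 1 ≤ padicValNat 2 t := one_le_padicValNat_of_dvd (by omega) (by
      rcases he with ⟨m, hm⟩; exact ⟨m, by omega⟩)
    omega
  · have h1 : padicValNat 2 t = 0 := padicValNat.eq_zero_of_not_dvd (by
      rcases ho with ⟨m, hm⟩; omega)
    have h2 : 1 ≤ padicValNat 2 (t+1) := one_le_padicValNat_of_dvd (by omega) (by
      rcases ho with ⟨m, hm⟩; exact ⟨m+1, by omega⟩)
    omega

lemma rho_eval (k m : ℕ) (hk : 1 ≤ k) : rho (2^(k-1) * (2*m+1)) = k := by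
  unfold rho
  have h1 : (2:ℕ)^(k-1) ≠ 0 := by positivity
  have h2 : 2*m+1 ≠ 0 := by omega
  rw [padicValNat.mul (p := 2) h1 h2, padicValNat.prime_pow,
    padicValNat.eq_zero_of_not_dvd (by omega)]
  omega

lemma rho_freq (k : ℕ) (hk : 1 ≤ k) : ∀ N, ∃ t, N ≤ t ∧ rho t = k := by
  intro N
  refine ⟨2^(k-1) * (2*N+1), ?_, rho_eval k N hk⟩
  have h1 : 1 ≤ (2:ℕ)^(k-1) := Nat.one_le_two_pow
  calc N ≤ 2*N+1 := by omega
    _ = 1 * (2*N+1) := by ring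
    _ ≤ 2^(k-1) * (2*N+1) := Nat.mul_le_mul_right _ h1

lemma rho_pos (t : ℕ) : 1 ≤ rho t := by unfold rho; omega

/-- The set of free digit positions of piece `k`. -/
def Ak (k : ℕ) (i : ℕ) : Prop :=
  k+1 < i ∧ (i ≤ tau (k+1) ∨ (i % 2 = 1 ∧ rho (ep i) ≠ k))

instance (k : ℕ) : DecidablePred (Ak k) := fun i => by unfold Ak; infer_instance

/-- Number of free positions of piece `k` up to `j`. -/
def cnt (k j : ℕ) : ℕ := ((Finset.Iic j).filter (Ak k)).card

lemma cnt_mono (k : ℕ) : Monotone (cnt k) := fun a b h =>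
  Finset.card_le_card (Finset.filter_subset_filter _ (Finset.Iic_subset_Iic.2 h))

/-- Count of odd numbers in an interval. -/
lemma card_odd_Ioc (a b : ℕ) (h : a ≤ b) :
    ((Finset.Ioc a b).filter (fun i => i % 2 = 1)).card = (b+1)/2 - (a+1)/2 := by
  induction b, h using Nat.le_induction with
  | base => simp
  | succ b hab ih =>
    have hio : Finset.Ioc a (b+1) = insert (b+1) (Finset.Ioc a b) := by
      ext i
      simp only [Finset.mem_Ioc, Finset.mem_insert]
      omega
    rw [hio, Finset.filter_insert]
    by_cases hpar : (b+1) % 2 = 1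
    · rw [if_pos hpar, Finset.card_insert_of_notMem (by simp), ih]
      omega
    · rw [if_neg hpar, ih]
      omega

lemma card_odd_Ioc_ge (a b : ℕ) (h : a ≤ b) :
    (b - a)/2 ≤ ((Finset.Ioc a b).filter (fun i => i % 2 = 1)).card := by
  rw [card_odd_Ioc a b h]; omega

/-- F1: full phase lower bound. -/
lemma cnt_full {k j : ℕ} (hj : j ≤ tau (k+1)) : j - (k+1) ≤ cnt k j := by
  have hsub : Finset.Ioc (k+1) j ⊆ (Finset.Iic j).filter (Ak k) := by
    intro i hi
    rw [Finset.mem_Ioc] at hi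
    rw [Finset.mem_filter, Finset.mem_Iic]
    exact ⟨hi.2, hi.1, Or.inl (le_trans hi.2 hj)⟩
  calc j - (k+1) = (Finset.Ioc (k+1) j).card := (Nat.card_Ioc _ _).symm
    _ ≤ _ := Finset.card_le_card hsub

/-- F2/F5: maintaining phase lower bound: if piece `k` does not dip in epochs `s..t`
and `tau t < j ≤ tau (t+1)`, then `cnt k j ≥ (j - tau s)/2`. -/
lemma cnt_maintain {k s t j : ℕ} (hks : k+1 ≤ s) (hst : s ≤ t)
    (hrho : ∀ u, s ≤ u → u ≤ t → rho u ≠ k)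
    (hj1 : tau t < j) (hj2 : j ≤ tau (t+1)) : (j - tau s)/2 ≤ cnt k j := by
  have hsub : (Finset.Ioc (tau s) j).filter (fun i => i % 2 = 1) ⊆
      (Finset.Iic j).filter (Ak k) := by
    intro i hi
    rw [Finset.mem_filter, Finset.mem_Ioc] at hi
    obtain ⟨⟨hi1, hi2⟩, hodd⟩ := hi
    rw [Finset.mem_filter, Finset.mem_Iic]
    have hu1 : s ≤ ep i := ep_ge hi1
    have hu2 : ep i ≤ t := by
      by_contra h
      push_neg at h
      have h2 : 2 ≤ i := by have := tau_pos s; omega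
      have h3 := ep_spec h2
      have h4 : tau (t+1) ≤ tau (ep i) := tau_monotone h
      omega
    have hki : k + 1 < i := by
      have := lt_tau_self s
      omega
    exact ⟨hi2, hki, Or.inr ⟨hodd, hrho _ hu1 hu2⟩⟩
  calc (j - tau s)/2 ≤ ((Finset.Ioc (tau s) j).filter (fun i => i % 2 = 1)).card :=
        card_odd_Ioc_ge _ _ (by have := tau_monotone hst; omega)
    _ ≤ _ := Finset.card_le_card hsub

/-- F3: global upper bound. -/
lemma cnt_le {k j : ℕ} : cnt k j ≤ j/2 + tau (k+1) + 2 := by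
  have hsub : (Finset.Iic j).filter (Ak k) ⊆
      (Finset.Iic (tau (k+1))) ∪ ((Finset.Ioc 0 j).filter (fun i => i % 2 = 1)) := by
    intro i hi
    rw [Finset.mem_filter, Finset.mem_Iic] at hi
    obtain ⟨hij, hk1, hcase⟩ := hi
    rcases hcase with h | h
    · exact Finset.mem_union_left _ (Finset.mem_Iic.2 h)
    · exact Finset.mem_union_right _ (by
        rw [Finset.mem_filter, Finset.mem_Ioc]
        exact ⟨⟨by omega, hij⟩, h.1⟩)
  calc cnt k j ≤ _ := Finset.card_le_card hsub
    _ ≤ (Finset.Iic (tau (k+1))).card + ((Finset.Ioc 0 j).filter (fun i => i % 2 = 1)).card :=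
        Finset.card_union_le _ _
    _ ≤ (tau (k+1) + 1) + ((j+1)/2) := by
        refine Nat.add_le_add (by simp) ?_
        rw [card_odd_Ioc 0 j (Nat.zero_le j)]
        omega
    _ ≤ j/2 + tau (k+1) + 2 := by omega

/-- F4: dip upper bound. -/
lemma cnt_dip {k t : ℕ} (hrho : rho t = k) (hkt : k+1 ≤ t) :
    cnt k (tau (t+1)) ≤ tau t + 1 := by
  have hsub : (Finset.Iic (tau (t+1))).filter (Ak k) ⊆ Finset.Iic (tau t) := by
    intro i hi
    rw [Finset.mem_filter, Finset.mem_Iic] at hi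
    obtain ⟨hij, hk1, hcase⟩ := hi
    rw [Finset.mem_Iic]
    by_contra h
    push_neg at h
    have hepi : ep i = t := ep_eq h hij
    rcases hcase with hc | hc
    · have : tau (k+1) ≤ tau t := tau_monotone hkt
      omega
    · rw [hepi] at hc
      exact hc.2 hrho
  calc cnt k (tau (t+1)) ≤ (Finset.Iic (tau t)).card := Finset.card_le_card hsub
    _ = tau t + 1 := by simp

/-- Count in a window `(d, m]`. -/
def cntW (k d m : ℕ) : ℕ := ((Finset.Ioc d m).filter (Ak k)).card

lemma cnt_le_cntW_add {k d m : ℕ} : cnt k m ≤ cntW k d m + (d + 1) := by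
  have hsub : (Finset.Iic m).filter (Ak k) ⊆
      ((Finset.Ioc d m).filter (Ak k)) ∪ Finset.Iic d := by
    intro i hi
    rw [Finset.mem_filter, Finset.mem_Iic] at hi
    by_cases h : i ≤ d
    · exact Finset.mem_union_right _ (Finset.mem_Iic.2 h)
    · exact Finset.mem_union_left _ (by
        rw [Finset.mem_filter, Finset.mem_Ioc]
        exact ⟨⟨by omega, hi.1⟩, hi.2⟩)
  calc cnt k m ≤ _ := Finset.card_le_card hsub
    _ ≤ cntW k d m + (Finset.Iic d).card := Finset.card_union_le _ _
    _ = cntW k d m + (d+1) := by simp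

lemma cntW_subset_full {k d m : ℕ} (hd : k+1 ≤ d) (hm : m ≤ tau (k+1)) :
    m - d ≤ cntW k d m := by
  have hsub : Finset.Ioc d m ⊆ (Finset.Ioc d m).filter (Ak k) := by
    intro i hi
    rw [Finset.mem_Ioc] at hi
    rw [Finset.mem_filter, Finset.mem_Ioc]
    exact ⟨⟨hi.1, hi.2⟩, by omega, Or.inl (le_trans hi.2 hm)⟩
  calc m - d = (Finset.Ioc d m).card := (Nat.card_Ioc _ _).symm
    _ ≤ _ := Finset.card_le_card hsub


noncomputable section

/-- Weights `w i = 2⁻ⁱ`. -/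
def w (i : ℕ) : ℝ := (1/2 : ℝ)^i

lemma w_pos (i : ℕ) : 0 < w i := by unfold w; positivity

lemma w_nonneg (i : ℕ) : 0 ≤ w i := (w_pos i).le

lemma w_summable : Summable w := summable_geometric_of_lt_one (by norm_num) (by norm_num)

lemma w_tsum : ∑' i, w i = 2 := by
  rw [show w = fun i : ℕ => (1/2:ℝ)^i from rfl, tsum_geometric_of_lt_one (by norm_num) (by norm_num)]
  norm_num

lemma w_anti {i j : ℕ} (h : i ≤ j) : w j ≤ w i :=
  pow_le_pow_of_le_one (by norm_num) (by norm_num) h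

lemma Iic_eq_range (d : ℕ) : Finset.Iic d = Finset.range (d+1) := by
  ext i; simp [Nat.lt_succ_iff]

lemma w_sum_Iic (d : ℕ) : ∑ i ∈ Finset.Iic d, w i = 2 - w d := by
  rw [Iic_eq_range]
  induction d with
  | zero => simp [w]; norm_num
  | succ d ih =>
    rw [Finset.sum_range_succ, ih]
    simp only [w, pow_succ]
    ring

lemma summable_ite_le {g : ℕ → ℝ} (hle : ∀ i, 0 ≤ g i ∧ g i ≤ w i) : Summable g :=
  Summable.of_nonneg_of_le (fun i => (hle i).1) (fun i => (hle i).2) w_summable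

lemma tsum_tail (d : ℕ) : ∑' i, (if d < i then w i else 0) = w d := by
  have hg : Summable (fun i => if i ≤ d then w i else 0) :=
    summable_of_ne_finset_zero (s := Finset.Iic d) (by
      intro i hi
      simp only [Finset.mem_Iic] at hi
      simp [hi])
  have hpt : ∀ i, (if d < i then w i else 0) = w i - (if i ≤ d then w i else 0) := by
    intro i
    by_cases h : d < i
    · simp [h, not_le.2 h]
    · simp [h, not_lt.1 h]
  calc ∑' i, (if d < i then w i else 0)
      = ∑' i, (w i - (if i ≤ d then w i else 0)) := by exact tsum_congr hpt
    _ = (∑' i, w i) - ∑' i, (if i ≤ d then w i else 0) := Summable.tsum_sub w_summable hg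
    _ = 2 - ∑ i ∈ Finset.Iic d, w i := by
        rw [w_tsum, tsum_eq_sum (s := Finset.Iic d) (by
          intro i hi
          simp only [Finset.mem_Iic] at hi
          simp [hi])]
        congr 1
        exact Finset.sum_congr rfl (fun i hi => by simp [Finset.mem_Iic.1 hi])
    _ = w d := by rw [w_sum_Iic]; ring

/-- The value of a digit sequence. -/
def val (ε : ℕ → Bool) : ℝ := ∑' i, if ε i then w i else 0

lemma val_term_mem (ε : ℕ → Bool) (i : ℕ) :
    0 ≤ (if ε i then w i else 0) ∧ (if ε i then w i else 0) ≤ w i := by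
  by_cases h : ε i <;> simp [h, w_nonneg, w_pos]

lemma val_summable (ε : ℕ → Bool) : Summable (fun i => if ε i then w i else 0) :=
  summable_ite_le (val_term_mem ε)

lemma val_nonneg (ε : ℕ → Bool) : 0 ≤ val ε := tsum_nonneg (fun i => (val_term_mem ε i).1)

lemma val_false : val (fun _ => false) = 0 := by simp [val]

lemma val_le_tail {ε : ℕ → Bool} {d : ℕ} (h : ∀ i, ε i = true → d < i) : val ε ≤ w d := by
  rw [← tsum_tail d]
  refine Summable.tsum_le_tsum (fun i => ?_) (val_summable ε)
    (summable_ite_le (fun i => by by_cases h' : d < i <;> simp [h', w_nonneg]))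
  by_cases h' : ε i
  · simp [h', h i h']
  · simp only [h', if_false]
    by_cases h'' : d < i <;> simp [h'', w_nonneg i]

lemma val_dist_le {ε ε' : ℕ → Bool} {d : ℕ} (h : ∀ i, i ≤ d → ε i = ε' i) :
    |val ε - val ε'| ≤ w d := by
  have hsub : val ε - val ε' = ∑' i, ((if ε i then w i else 0) - (if ε' i then w i else 0)) :=
    (Summable.tsum_sub (val_summable ε) (val_summable ε')).symm
  rw [hsub]
  have habs : ∀ i, |(if ε i then w i else 0) - (if ε' i then w i else 0)| ≤
      (if d < i then w i else 0) := by
    intro i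
    by_cases hid : i ≤ d
    · rw [h i hid]
      simp [not_lt.2 hid]
    · have h1 := val_term_mem ε i
      have h2 := val_term_mem ε' i
      rw [if_pos (not_le.1 hid), abs_sub_le_iff]
      constructor <;> linarith [h1.1, h1.2, h2.1, h2.2]
  calc |∑' i, ((if ε i then w i else 0) - (if ε' i then w i else 0))|
      ≤ ∑' i, |(if ε i then w i else 0) - (if ε' i then w i else 0)| := by
        have hs : Summable (fun i => |(if ε i then w i else 0) - (if ε' i then w i else 0)|) := by
          refine summable_ite_le (fun i => ⟨abs_nonneg _, le_trans (habs i) ?_⟩)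
          by_cases h' : d < i <;> simp [h', w_nonneg]
        simpa [Real.norm_eq_abs] using norm_tsum_le_tsum_norm (f := fun i =>
          ((if ε i then w i else 0) - (if ε' i then w i else 0))) (by simpa [Real.norm_eq_abs] using hs)
    _ ≤ ∑' i, (if d < i then w i else 0) := by
        refine Summable.tsum_le_tsum habs ?_ ?_
        · refine summable_ite_le (fun i => ⟨abs_nonneg _, le_trans (habs i) ?_⟩)
          by_cases h' : d < i <;> simp [h', w_nonneg]
        · exact summable_ite_le (fun i => by by_cases h' : d < i <;> simp [h', w_nonneg])
    _ = w d := tsum_tail d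

/-- Splitting a truncated-plus-finite digit sequence. -/
lemma val_split (ε : ℕ → Bool) (d : ℕ) (G : Finset ℕ) (hG : ∀ i ∈ G, d < i) :
    val (fun i => if i ≤ d then ε i else decide (i ∈ G)) =
      val (fun i => ε i && decide (i ≤ d)) + ∑ i ∈ G, w i := by
  have hpt : ∀ i, (if (if i ≤ d then ε i else decide (i ∈ G)) then w i else 0) =
      (if (ε i && decide (i ≤ d)) then w i else 0) + (if i ∈ G then w i else 0) := by
    intro i
    by_cases hid : i ≤ d
    · have hiG : i ∉ G := fun hmem => absurd (hG i hmem) (not_lt.2 hid)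
      by_cases hε : ε i <;> simp [hid, hε, hiG]
    · by_cases hiG : i ∈ G <;> simp [hid, hiG]
  have hfin : Summable (fun i => if i ∈ G then w i else 0) :=
    summable_of_ne_finset_zero (s := G) (by intro i hi; simp [hi])
  calc val (fun i => if i ≤ d then ε i else decide (i ∈ G))
      = ∑' i, ((if (ε i && decide (i ≤ d)) then w i else 0) + (if i ∈ G then w i else 0)) :=
        tsum_congr hpt
    _ = val (fun i => ε i && decide (i ≤ d)) + ∑' i, (if i ∈ G then w i else 0) :=
        Summable.tsum_add (val_summable _) hfin
    _ = _ := by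
        rw [tsum_eq_sum (s := G) (by intro i hi; simp [hi])]
        congr 1
        exact Finset.sum_congr rfl (fun i hi => by simp [hi])

/-- Separation of distinct finite binary sums. -/
lemma sum_w_sep {m : ℕ} {G G' : Finset ℕ} (hG : ∀ i ∈ G, i ≤ m) (hG' : ∀ i ∈ G', i ≤ m)
    (hne : G ≠ G') : w m ≤ |∑ i ∈ G, w i - ∑ i ∈ G', w i| := by
  classical
  -- the natural-number codes
  set N : ℕ := ∑ i ∈ G, 2^(m - i) with hN
  set N' : ℕ := ∑ i ∈ G', 2^(m - i) with hN'
  have key : ∀ (H : Finset ℕ), (∀ i ∈ H, i ≤ m) → ∑ i ∈ H, w i = w m * (∑ i ∈ H, 2^(m - i) : ℕ) := by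
    intro H hH
    push_cast
    rw [Finset.mul_sum]
    refine Finset.sum_congr rfl (fun i hi => ?_)
    have him : i ≤ m := hH i hi
    have zw : ∀ n : ℕ, w n = (2:ℝ) ^ (-(n:ℤ)) := by
      intro n
      rw [w, one_div, inv_pow, ← zpow_natCast, ← zpow_neg]
    rw [zw, zw, ← zpow_natCast (2:ℝ) (m-i), ← zpow_add₀ (by norm_num : (2:ℝ) ≠ 0)]
    congr 1
    omega
  have hinj : N ≠ N' := by
    intro hNN
    apply hne
    have recov : ∀ (H : Finset ℕ), (∀ i ∈ H, i ≤ m) →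
        ((H.image (fun i => m - i)).image (fun i => m - i)) = H := by
      intro H hH
      rw [Finset.image_image]
      have : ∀ i ∈ H, ((fun i => m - i) ∘ (fun i => m - i)) i = id i := by
        intro i hi
        have := hH i hi
        simp only [Function.comp_apply, id_eq]
        omega
      rw [Finset.image_congr (fun i hi => this i hi), Finset.image_id]
    have himg : ∀ (H : Finset ℕ), (∀ i ∈ H, i ≤ m) →
        ∑ i ∈ H.image (fun i => m - i), 2^i = ∑ i ∈ H, 2^(m-i) := by
      intro H hH
      rw [Finset.sum_image]
      intro i hi j hj hij
      have := hH i hi; have := hH j hj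
      simp only at hij
      omega
    have h1 : ∑ i ∈ G.image (fun i => m - i), 2^i = ∑ i ∈ G'.image (fun i => m - i), 2^i := by
      rw [himg G hG, himg G' hG', ← hN, ← hN', hNN]
    have h2 : G.image (fun i => m - i) = G'.image (fun i => m - i) :=
      Finset.geomSum_injective (le_refl 2) h1
    calc G = (G.image (fun i => m - i)).image (fun i => m - i) := (recov G hG).symm
      _ = (G'.image (fun i => m - i)).image (fun i => m - i) := by rw [h2]
      _ = G' := recov G' hG'
  rw [key G hG, key G' hG', ← mul_sub, abs_mul, abs_of_pos (w_pos m)]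
  have hZ : (1:ℝ) ≤ |(N:ℝ) - (N':ℝ)| := by
    have : ((N:ℤ) - (N':ℤ) : ℤ) ≠ 0 := sub_ne_zero.2 (by exact_mod_cast hinj)
    have h1 : (1:ℤ) ≤ |(N:ℤ) - (N':ℤ)| := Int.one_le_abs this
    calc (1:ℝ) = ((1:ℤ):ℝ) := by norm_num
      _ ≤ ((|(N:ℤ) - (N':ℤ)|:ℤ):ℝ) := by exact_mod_cast h1
      _ = |(N:ℝ) - (N':ℝ)| := by push_cast; rfl
  nlinarith [w_pos m, abs_nonneg ((N:ℝ) - (N':ℝ))]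

/-- Piece `k` of the construction. -/
def piece (k : ℕ) : Set ℝ :=
  (fun ε : ℕ → Bool => w k + val ε) '' {ε | ∀ i, ε i = true → Ak k i}

/-- The compact set `X` of the example. -/
def XX : Set ℝ := {0} ∪ ⋃ k, piece (k+1)

lemma piece_subset_Icc {k : ℕ} : piece k ⊆ Set.Icc (w k) (w k + w (k+1)) := by
  rintro x ⟨ε, hε, rfl⟩
  dsimp only
  constructor
  · linarith [val_nonneg ε]
  · have : val ε ≤ w (k+1) := val_le_tail (fun i hi => by
      have := (hε i hi).1
      omega)
    linarith

lemma piece_nonempty (k : ℕ) : (w k) ∈ piece k :=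
  ⟨fun _ => false, by simp [Set.mem_setOf_eq], by dsimp only; rw [val_false]; ring⟩

end

lemma le_capacity {δ : ℝ} {E : Set ℝ} (F : Finset ℝ) (hF : ↑F ⊆ E)
    (hsep : ∀ x ∈ F, ∀ y ∈ F, x ≠ y → δ < dist x y) :
    (F.card : ℝ≥0∞) ≤ capacity δ E :=
  le_iSup₂ (f := fun (F : Finset ℝ)
    (_ : ↑F ⊆ E ∧ ∀ x ∈ F, ∀ y ∈ F, x ≠ y → δ < dist x y) => (F.card : ℝ≥0∞)) F ⟨hF, hsep⟩

lemma capacity_le {δ : ℝ} {E : Set ℝ} {c : ℝ≥0∞}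
    (h : ∀ F : Finset ℝ, ↑F ⊆ E → (∀ x ∈ F, ∀ y ∈ F, x ≠ y → δ < dist x y) →
      (F.card : ℝ≥0∞) ≤ c) : capacity δ E ≤ c :=
  iSup₂_le (fun F hF => h F hF.1 hF.2)

lemma capacity_mono {δ : ℝ} {E E' : Set ℝ} (h : E ⊆ E') : capacity δ E ≤ capacity δ E' :=
  capacity_le fun F hF hsep => le_capacity F (Set.Subset.trans hF h) hsep

lemma capacity_anti {δ δ' : ℝ} {E : Set ℝ} (h : δ ≤ δ') : capacity δ' E ≤ capacity δ E :=
  capacity_le fun F hF hsep =>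
    le_capacity F hF (fun x hx y hy hxy => lt_of_le_of_lt h (hsep x hx y hy hxy))

lemma one_le_capacity {δ : ℝ} {E : Set ℝ} {x : ℝ} (hx : x ∈ E) : 1 ≤ capacity δ E := by
  have := le_capacity (δ := δ) (E := E) {x} (by simpa using hx) (by
    intro a ha b hb hab
    simp only [Finset.mem_singleton] at ha hb
    exact absurd (ha.trans hb.symm) hab)
  simpa using this

lemma capacity_le_one {δ : ℝ} {E : Set ℝ} (h : ∀ x ∈ E, ∀ y ∈ E, dist x y ≤ δ) :
    capacity δ E ≤ 1 :=
  capacity_le fun F hF hsep => by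
    have hcard : F.card ≤ 1 := Finset.card_le_one.2 (fun x hx y hy => by
      by_contra hne
      exact absurd (h x (hF hx) y (hF hy)) (not_le.2 (hsep x hx y hy hne)))
    exact_mod_cast hcard

lemma capacity_union_le {δ : ℝ} {E E' : Set ℝ} :
    capacity δ (E ∪ E') ≤ capacity δ E + capacity δ E' := by
  classical
  refine capacity_le fun F hF hsep => ?_
  have h1 : ((F.filter (· ∈ E)).card : ℝ≥0∞) ≤ capacity δ E := by
    refine le_capacity _ (fun x hx => ?_) (fun x hx y hy hxy =>
      hsep x (Finset.filter_subset _ _ hx) y (Finset.filter_subset _ _ hy) hxy)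
    simp only [Finset.coe_filter, Set.mem_setOf_eq] at hx
    exact hx.2
  have h2 : ((F.filter (· ∉ E)).card : ℝ≥0∞) ≤ capacity δ E' := by
    refine le_capacity _ (fun x hx => ?_) (fun x hx y hy hxy =>
      hsep x (Finset.filter_subset _ _ hx) y (Finset.filter_subset _ _ hy) hxy)
    simp only [Finset.coe_filter, Set.mem_setOf_eq] at hx
    rcases hF hx.1 with h | h
    · exact absurd h hx.2
    · exact h
  calc (F.card : ℝ≥0∞)
      = ((F.filter (· ∈ E)).card + (F.filter (· ∉ E)).card : ℕ) := by
        rw [Finset.card_filter_add_card_filter_not]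
    _ = ((F.filter (· ∈ E)).card : ℝ≥0∞) + ((F.filter (· ∉ E)).card : ℝ≥0∞) := by push_cast; rfl
    _ ≤ _ := add_le_add h1 h2

lemma capacity_biUnion_le {δ : ℝ} (s : Finset ℕ) (Es : ℕ → Set ℝ) :
    capacity δ (⋃ k ∈ s, Es k) ≤ ∑ k ∈ s, capacity δ (Es k) := by
  classical
  induction s using Finset.induction_on with
  | empty =>
    rw [Finset.sum_empty]
    refine capacity_le fun F hF hsep => ?_
    have h0 : ↑F ⊆ (∅ : Set ℝ) := by simpa using hF
    have hFe : F = ∅ := Finset.coe_eq_empty.1 (Set.subset_empty_iff.1 h0)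
    simp [hFe]
  | insert a s' hnot ih =>
    rw [Finset.set_biUnion_insert, Finset.sum_insert hnot]
    exact le_trans capacity_union_le (add_le_add le_rfl ih)

lemma card_le_capacity_closure {δ : ℝ} (hδ : 0 < δ) {E : Set ℝ} (F : Finset ℝ)
    (hF : ↑F ⊆ closure E) (hsep : ∀ x ∈ F, ∀ y ∈ F, x ≠ y → 2*δ ≤ dist x y) :
    (F.card : ℝ≥0∞) ≤ capacity δ E := by
  classical
  have hch : ∀ x ∈ F, ∃ y ∈ E, dist x y < δ/2 := fun x hx =>
    Metric.mem_closure_iff.1 (hF hx) (δ/2) (by linarith)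
  choose! g hg1 hg2 using hch
  have hinj : Set.InjOn g ↑F := by
    intro x hx y hy hgxy
    by_contra hne
    have h1 := hsep x hx y hy hne
    have h2 : dist x y ≤ dist x (g x) + dist (g y) y := by
      calc dist x y ≤ dist x (g x) + dist (g x) y := dist_triangle _ _ _
        _ = dist x (g x) + dist (g y) y := by rw [hgxy, dist_comm]
    have := hg2 x hx
    have := hg2 y hy
    rw [dist_comm (g y) y] at h2
    linarith
  refine le_trans ?_ (le_capacity (F.image g) (fun z hz => ?_) (fun z hz z' hz' hzz' => ?_))
  · rw [Finset.card_image_of_injOn hinj]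
  · simp only [Finset.coe_image] at hz
    rcases hz with ⟨x, hx, rfl⟩
    exact hg1 x hx
  · simp only [Finset.mem_image] at hz hz'
    obtain ⟨x, hx, rfl⟩ := hz
    obtain ⟨y, hy, rfl⟩ := hz'
    have hne : x ≠ y := fun h => hzz' (by rw [h])
    have h1 := hsep x hx y hy hne
    have h2 := hg2 x hx
    have h3 := hg2 y hy
    have h4 : dist x y ≤ dist x (g x) + dist (g x) (g y) + dist (g y) y :=
      dist_triangle4 _ _ _ _
    rw [dist_comm (g y) y] at h4
    linarith

lemma capacity_Icc_le {δ a b : ℝ} (hδ : 0 < δ) (hab : a ≤ b) {E : Set ℝ}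
    (hE : E ⊆ Set.Icc a b) : capacity δ E ≤ ((⌊(b - a)/δ⌋₊ + 1 : ℕ) : ℝ≥0∞) := by
  refine capacity_le fun F hF hsep => ?_
  have hcard : F.card ≤ ⌊(b - a)/δ⌋₊ + 1 := by
    have : F.card ≤ (Finset.range (⌊(b - a)/δ⌋₊ + 1)).card := by
      refine Finset.card_le_card_of_injOn (fun x => ⌊(x - a)/δ⌋₊) (fun x hx => ?_) ?_
      · have hx' := hE (hF hx)
        rw [Finset.mem_coe, Finset.mem_range, Nat.lt_succ_iff]
        refine Nat.floor_le_floor ?_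
        gcongr
        exact hx'.2
      · intro x hx y hy hxy
        simp only at hxy
        by_contra hne
        have h1 := hsep x hx y hy hne
        have hx' := hE (hF hx)
        have hy' := hE (hF hy)
        have hux : 0 ≤ (x - a)/δ := div_nonneg (by linarith [hx'.1]) hδ.le
        have huy : 0 ≤ (y - a)/δ := div_nonneg (by linarith [hy'.1]) hδ.le
        have hb1 : (x - a)/δ < (y - a)/δ + 1 := by
          calc (x - a)/δ < (⌊(x - a)/δ⌋₊ : ℝ) + 1 := Nat.lt_floor_add_one _
            _ = (⌊(y - a)/δ⌋₊ : ℝ) + 1 := by rw [hxy]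
            _ ≤ (y - a)/δ + 1 := by linarith [Nat.floor_le huy]
        have hb2 : (y - a)/δ < (x - a)/δ + 1 := by
          calc (y - a)/δ < (⌊(y - a)/δ⌋₊ : ℝ) + 1 := Nat.lt_floor_add_one _
            _ = (⌊(x - a)/δ⌋₊ : ℝ) + 1 := by rw [hxy]
            _ ≤ (x - a)/δ + 1 := by linarith [Nat.floor_le hux]
        have hring : (x - a)/δ - (y - a)/δ = (x - y)/δ := by ring
        have hring2 : (y - a)/δ - (x - a)/δ = (y - x)/δ := by ring
        have hd1 : x - y < δ := (div_lt_one hδ).1 (by linarith)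
        have hd2 : y - x < δ := (div_lt_one hδ).1 (by linarith)
        have hd : |x - y| < δ := abs_lt.2 ⟨by linarith, hd1⟩
        rw [Real.dist_eq] at h1
        linarith
    simpa using this
  exact_mod_cast hcard

lemma w_pred {j : ℕ} (hj : 1 ≤ j) : w (j-1) = 2 * w j := by
  obtain ⟨j', rfl⟩ : ∃ j', j = j' + 1 := ⟨j - 1, by omega⟩
  simp only [Nat.add_sub_cancel, w, pow_succ]
  ring

noncomputable def cylPt (k d : ℕ) (ε : ℕ → Bool) (G : Finset ℕ) : ℝ :=
  w k + val (fun i => if i ≤ d then ε i else decide (i ∈ G))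

lemma cylPt_mem {k d : ℕ} {ε : ℕ → Bool} (hε : ∀ i, ε i = true → Ak k i)
    {G : Finset ℕ} (hG : ∀ i ∈ G, Ak k i) : cylPt k d ε G ∈ piece k := by
  refine ⟨_, ?_, rfl⟩
  intro i hi
  have hi' : (if i ≤ d then ε i else decide (i ∈ G)) = true := hi
  by_cases h : i ≤ d
  · exact hε i (by rwa [if_pos h] at hi')
  · rw [if_neg h] at hi'
    exact hG i (of_decide_eq_true hi')

lemma cylPt_close {k d : ℕ} {ε : ℕ → Bool} {G : Finset ℕ} :
    |cylPt k d ε G - (w k + val ε)| ≤ w d := by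
  have h := val_dist_le (ε := fun i => if i ≤ d then ε i else decide (i ∈ G)) (ε' := ε)
    (d := d) (fun i hid => if_pos hid)
  calc |cylPt k d ε G - (w k + val ε)|
      = |val (fun i => if i ≤ d then ε i else decide (i ∈ G)) - val ε| := by
        rw [cylPt, add_sub_add_left_eq_sub]
    _ ≤ w d := h

lemma cylPt_sep {k d m : ℕ} {ε : ℕ → Bool} {G G' : Finset ℕ}
    (hG : ∀ i ∈ G, d < i ∧ i ≤ m) (hG' : ∀ i ∈ G', d < i ∧ i ≤ m) (hne : G ≠ G') :
    w m ≤ |cylPt k d ε G - cylPt k d ε G'| := by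
  rw [cylPt, cylPt, add_sub_add_left_eq_sub,
    val_split ε d G (fun i hi => (hG i hi).1), val_split ε d G' (fun i hi => (hG' i hi).1),
    add_sub_add_left_eq_sub]
  exact sum_w_sep (fun i hi => (hG i hi).2) (fun i hi => (hG' i hi).2) hne

lemma cyl_family {k d j : ℕ} (hj : 1 ≤ j) (ε : ℕ → Bool) (hε : ∀ i, ε i = true → Ak k i) :
    ∃ F : Finset ℝ,
      (F.card : ℝ≥0∞) = (2:ℝ≥0∞)^(cntW k d (j-1)) ∧
      (∀ z ∈ F, z ∈ piece k ∧ |z - (w k + val ε)| ≤ w d) ∧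
      (∀ z ∈ F, ∀ z' ∈ F, z ≠ z' → 2 * w j ≤ dist z z') := by
  classical
  set P := (Finset.Ioc d (j-1)).filter (Ak k) with hP
  have hmemP : ∀ {G : Finset ℕ}, G ∈ P.powerset → ∀ i ∈ G, (d < i ∧ i ≤ j-1) ∧ Ak k i := by
    intro G hG i hi
    have := Finset.mem_powerset.1 hG hi
    rw [hP, Finset.mem_filter, Finset.mem_Ioc] at this
    exact this
  have hinj : Set.InjOn (cylPt k d ε) ↑P.powerset := by
    intro G hG G' hG' heq
    by_contra hne
    have hsep := cylPt_sep (k := k) (ε := ε)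
      (fun i hi => (hmemP (Finset.mem_coe.1 hG) i hi).1)
      (fun i hi => (hmemP (Finset.mem_coe.1 hG') i hi).1) hne
    rw [heq, sub_self, abs_zero] at hsep
    exact absurd hsep (not_le.2 (w_pos _))
  refine ⟨P.powerset.image (cylPt k d ε), ?_, ?_, ?_⟩
  · rw [Finset.card_image_of_injOn hinj, Finset.card_powerset]
    push_cast
    rfl
  · intro z hz
    obtain ⟨G, hG, rfl⟩ := Finset.mem_image.1 hz
    exact ⟨cylPt_mem hε (fun i hi => (hmemP hG i hi).2), cylPt_close⟩
  · intro z hz z' hz' hzz'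
    obtain ⟨G, hG, rfl⟩ := Finset.mem_image.1 hz
    obtain ⟨G', hG', rfl⟩ := Finset.mem_image.1 hz'
    have hne : G ≠ G' := fun h => hzz' (by rw [h])
    have hs := cylPt_sep (k := k) (ε := ε)
      (fun i hi => (hmemP hG i hi).1) (fun i hi => (hmemP hG' i hi).1) hne
    rw [Real.dist_eq, ← w_pred hj]
    exact hs

/-- Lower capacity bound for a piece from a cylinder. -/
lemma capacity_piece_ge {k d j : ℕ} (hj : 1 ≤ j) (ε : ℕ → Bool)
    (hε : ∀ i, ε i = true → Ak k i) :
    (2:ℝ≥0∞)^(cntW k d (j-1)) ≤ capacity (w j) (piece k) := by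
  obtain ⟨F, hcard, hmem, hsep⟩ := cyl_family (d := d) hj ε hε
  rw [← hcard]
  refine le_capacity F (fun z hz => (hmem z hz).1) (fun z hz z' hz' hne => ?_)
  have := hsep z hz z' hz' hne
  have := w_pos j
  linarith

/-- Lower capacity bound through the closure of a set containing a cylinder. -/
lemma capacity_closure_ge {k d j : ℕ} (hj : 1 ≤ j) (ε : ℕ → Bool)
    (hε : ∀ i, ε i = true → Ak k i) {En : Set ℝ}
    (hball : ∀ z ∈ piece k, |z - (w k + val ε)| ≤ w d → z ∈ closure En) :
    (2:ℝ≥0∞)^(cntW k d (j-1)) ≤ capacity (w j) En := by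
  obtain ⟨F, hcard, hmem, hsep⟩ := cyl_family (d := d) hj ε hε
  rw [← hcard]
  refine card_le_capacity_closure (w_pos j) F (fun z hz => ?_) (fun z hz z' hz' hne => ?_)
  · exact hball z (hmem z hz).1 (hmem z hz).2
  · exact hsep z hz z' hz' hne

/-- Upper capacity bound for a piece. -/
lemma capacity_piece_le {k j : ℕ} : capacity (w j) (piece k) ≤ (2:ℝ≥0∞)^(cnt k j) := by
  classical
  refine capacity_le fun F hF hsep => ?_
  set P := (Finset.Iic j).filter (Ak k) with hP
  set Φ : ℝ → Finset ℕ := fun x =>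
    if h : x ∈ piece k then
      (Finset.Iic j).filter (fun i => ((Set.mem_image _ _ _).1 h).choose i = true)
    else ∅ with hΦ
  have hcard : F.card ≤ P.powerset.card := by
    refine Finset.card_le_card_of_injOn Φ (fun x hx => ?_) (fun x hx y hy hxy => ?_)
    · have hxp : x ∈ piece k := hF hx
      rw [Finset.mem_coe, Finset.mem_powerset, hΦ]
      simp only [dif_pos hxp]
      intro i hi
      rw [Finset.mem_filter] at hi
      rw [hP, Finset.mem_filter]
      exact ⟨hi.1, (((Set.mem_image _ _ _).1 hxp).choose_spec.1) i hi.2⟩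
    · have hxp : x ∈ piece k := hF hx
      have hyp : y ∈ piece k := hF hy
      set εx := ((Set.mem_image _ _ _).1 hxp).choose with hεx
      set εy := ((Set.mem_image _ _ _).1 hyp).choose with hεy
      have hxv : w k + val εx = x := ((Set.mem_image _ _ _).1 hxp).choose_spec.2
      have hyv : w k + val εy = y := ((Set.mem_image _ _ _).1 hyp).choose_spec.2
      rw [hΦ] at hxy
      simp only [dif_pos hxp, dif_pos hyp] at hxy
      have hagree : ∀ i, i ≤ j → εx i = εy i := by
        intro i hi
        have hiff := Finset.ext_iff.1 hxy i
        simp only [Finset.mem_filter, Finset.mem_Iic] at hiff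
        have hiff' : (εx i = true) ↔ (εy i = true) := by
          constructor
          · intro h; exact (hiff.1 ⟨hi, h⟩).2
          · intro h; exact (hiff.2 ⟨hi, h⟩).2
        cases hx1 : εx i <;> cases hy1 : εy i
        · rfl
        · exact absurd (hiff'.2 hy1) (by rw [hx1]; simp)
        · exact absurd (hiff'.1 hx1) (by rw [hy1]; simp)
        · rfl
      have hdist : |x - y| ≤ w j := by
        rw [← hxv, ← hyv, add_sub_add_left_eq_sub]
        exact val_dist_le hagree
      by_contra hne
      have := hsep x hx y hy hne
      rw [Real.dist_eq] at this
      linarith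
  rw [Finset.card_powerset] at hcard
  calc (F.card : ℝ≥0∞) ≤ ((2^(P.card) : ℕ) : ℝ≥0∞) := by exact_mod_cast hcard
    _ = (2:ℝ≥0∞)^(cnt k j) := by push_cast; rfl

lemma log_two_pow (m : ℕ) :
    ENNReal.log ((2:ℝ≥0∞)^m) = ((m * Real.log 2 : ℝ) : EReal) := by
  rw [ENNReal.log_pow, ENNReal.log_pos_real (by norm_num) (by norm_num)]
  norm_num

lemma one_le_two_pow_e {m : ℕ} : (1:ℝ≥0∞) ≤ 2^m := by
  calc (1:ℝ≥0∞) = 1^m := (one_pow m).symm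
    _ ≤ 2^m := pow_le_pow_left₀ (by norm_num) (by norm_num) m

lemma ereal_le_of_forall_sub {β : ℝ} {L : EReal}
    (h : ∀ ε : ℝ, 0 < ε → ((β - ε : ℝ) : EReal) ≤ L) : (β : EReal) ≤ L := by
  induction L with
  | bot =>
    have := h 1 (by norm_num)
    simp only [le_bot_iff] at this
    exact absurd this (EReal.coe_ne_bot _)
  | coe c =>
    rw [EReal.coe_le_coe_iff]
    by_contra hc
    push_neg at hc
    have := h ((β - c)/2) (by linarith)
    rw [EReal.coe_le_coe_iff] at this
    linarith
  | top => exact le_top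

lemma ereal_le_of_forall_add {β : ℝ} {L : EReal}
    (h : ∀ ε : ℝ, 0 < ε → L ≤ ((β + ε : ℝ) : EReal)) : L ≤ (β : EReal) := by
  induction L with
  | bot => exact bot_le
  | coe c =>
    rw [EReal.coe_le_coe_iff]
    by_contra hc
    push_neg at hc
    have := h ((c - β)/2) (by linarith)
    rw [EReal.coe_le_coe_iff] at this
    linarith
  | top =>
    have := h 1 (by norm_num)
    simp only [top_le_iff] at this
    exact absurd this (EReal.coe_ne_top _)

/-- The scale index of `δ`. -/
noncomputable def jOf (δ : ℝ) : ℕ := ⌊Real.logb 2 δ⁻¹⌋₊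

lemma jOf_tendsto : Filter.Tendsto jOf (𝓝[>] (0:ℝ)) Filter.atTop := by
  have h1 : Filter.Tendsto (fun δ : ℝ => δ⁻¹) (𝓝[>] (0:ℝ)) Filter.atTop :=
    tendsto_inv_nhdsGT_zero
  have h2 : Filter.Tendsto (Real.logb 2) Filter.atTop Filter.atTop :=
    Real.tendsto_logb_atTop (by norm_num)
  exact tendsto_nat_floor_atTop.comp (h2.comp h1)

lemma delta_le_w_jOf {δ : ℝ} (h0 : 0 < δ) (h1 : δ ≤ 1) : δ ≤ w (jOf δ) := by
  have hinv : 1 ≤ δ⁻¹ := one_le_inv_iff₀.2 ⟨h0, h1⟩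
  have hlogb : 0 ≤ Real.logb 2 δ⁻¹ := Real.logb_nonneg (by norm_num) hinv
  have hfl : (jOf δ : ℝ) ≤ Real.logb 2 δ⁻¹ := Nat.floor_le hlogb
  have hpow : (2:ℝ)^(jOf δ : ℝ) ≤ δ⁻¹ := by
    calc (2:ℝ)^(jOf δ : ℝ) ≤ (2:ℝ)^(Real.logb 2 δ⁻¹) :=
          Real.rpow_le_rpow_of_exponent_le (by norm_num) hfl
      _ = δ⁻¹ := Real.rpow_logb (by norm_num) (by norm_num) (by positivity)
  have hpow' : (2:ℝ)^(jOf δ) ≤ δ⁻¹ := by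
    rwa [← Real.rpow_natCast (2:ℝ) (jOf δ)]
  have h2 : w (jOf δ) = ((2:ℝ)^(jOf δ))⁻¹ := by
    rw [w, one_div, inv_pow]
  have hfin : δ ≤ ((2:ℝ)^(jOf δ))⁻¹ := by
    have h3 : (δ⁻¹)⁻¹ ≤ ((2:ℝ)^(jOf δ))⁻¹ := inv_anti₀ (by positivity) hpow'
    rwa [inv_inv] at h3
  rw [h2]
  exact hfin

lemma abs_log_le {δ : ℝ} (h0 : 0 < δ) (h1 : δ < 1) :
    |Real.log δ| ≤ ((jOf δ : ℝ) + 1) * Real.log 2 := by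
  have hneg : Real.log δ < 0 := Real.log_neg h0 h1
  have habs : |Real.log δ| = Real.log δ⁻¹ := by
    rw [abs_of_neg hneg, Real.log_inv]
  have hlt : Real.logb 2 δ⁻¹ < (jOf δ : ℝ) + 1 := Nat.lt_floor_add_one _
  have hlog2 : 0 < Real.log 2 := Real.log_pos (by norm_num)
  have : Real.log δ⁻¹ = Real.logb 2 δ⁻¹ * Real.log 2 := by
    rw [Real.logb, div_mul_cancel₀ _ hlog2.ne']
  rw [habs, this]
  nlinarith

lemma abs_log_w {j : ℕ} : |Real.log (w j)| = (j : ℝ) * Real.log 2 := by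
  have : Real.log (w j) = -(j * Real.log 2) := by
    rw [w, one_div, inv_pow, Real.log_inv, Real.log_pow]
  rw [this, abs_neg, abs_of_nonneg (mul_nonneg (Nat.cast_nonneg j) (Real.log_nonneg one_le_two))]

lemma abs_log_pos {δ : ℝ} (h0 : 0 < δ) (h1 : δ < 1) : 0 < |Real.log δ| :=
  abs_pos.2 (ne_of_lt (Real.log_neg h0 h1))

/-- Master lower bound for `lbdim`. -/
lemma lbdim_ge (E : Set ℝ) (β : ℝ) (m : ℕ → ℕ)
    (hcap : ∀ᶠ j : ℕ in Filter.atTop, (2:ℝ≥0∞)^(m j) ≤ capacity (w j) E)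
    (hm : ∀ ε : ℝ, 0 < ε → ∀ᶠ j : ℕ in Filter.atTop, (β - ε) * ((j:ℝ)+1) ≤ (m j : ℝ)) :
    (β : EReal) ≤ lbdim E := by
  refine ereal_le_of_forall_sub fun ε hε => ?_
  refine Filter.le_liminf_of_le (by isBoundedDefault) ?_
  obtain ⟨J, hJ⟩ := Filter.eventually_atTop.1 (hcap.and (hm ε hε))
  have hev1 : Set.Ioo (0:ℝ) 1 ∈ 𝓝[>] (0:ℝ) :=
    Ioo_mem_nhdsGT_of_mem (by constructor <;> norm_num)
  have hev2 : ∀ᶠ δ in 𝓝[>] (0:ℝ), J ≤ jOf δ := jOf_tendsto.eventually (Filter.eventually_ge_atTop J)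
  filter_upwards [hev1, hev2] with δ hδ hJδ
  obtain ⟨hδ0, hδ1⟩ := hδ
  set j := jOf δ with hj
  obtain ⟨hc, hmj⟩ := hJ j hJδ
  have hnum : ((m j * Real.log 2 : ℝ) : EReal) ≤ (capacity δ E).log := by
    rw [← log_two_pow]
    refine ENNReal.log_monotone (le_trans hc (capacity_anti ?_))
    exact delta_le_w_jOf hδ0 hδ1.le
  have hden0 : (0:ℝ) ≤ |Real.log δ| := abs_nonneg _
  have hstep : (((m j * Real.log 2)/|Real.log δ| : ℝ) : EReal) ≤
      (capacity δ E).log / ((|Real.log δ| : ℝ) : EReal) := by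
    rw [EReal.coe_div]
    exact EReal.div_le_div_right_of_nonneg (by exact_mod_cast hden0) hnum
  refine le_trans ?_ hstep
  rw [EReal.coe_le_coe_iff]
  have hlog2 : 0 < Real.log 2 := Real.log_pos (by norm_num)
  have hdenpos : 0 < |Real.log δ| := abs_log_pos hδ0 hδ1
  rcases le_or_gt (β - ε) 0 with hbe | hbe
  · exact le_trans hbe (by positivity)
  · rw [le_div_iff₀ hdenpos]
    have h1 : |Real.log δ| ≤ ((j:ℝ)+1) * Real.log 2 := abs_log_le hδ0 hδ1
    calc (β - ε) * |Real.log δ| ≤ (β - ε) * (((j:ℝ)+1) * Real.log 2) := by nlinarith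
      _ = ((β - ε) * ((j:ℝ)+1)) * Real.log 2 := by ring
      _ ≤ (m j : ℝ) * Real.log 2 := by nlinarith

/-- Master upper bound for `lbdim`. -/
lemma lbdim_le (E : Set ℝ) (β : ℝ) (b : ℕ → ℕ)
    (H : ∀ ε : ℝ, 0 < ε → ∃ᶠ j : ℕ in Filter.atTop,
      1 ≤ j ∧ capacity (w j) E ≤ (2:ℝ≥0∞)^(b j) ∧ (b j : ℝ) ≤ (β + ε) * j) :
    lbdim E ≤ (β : EReal) := by
  refine ereal_le_of_forall_add fun ε hε => ?_
  refine Filter.liminf_le_of_frequently_le' ?_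
  have hmap : Filter.Tendsto (fun j : ℕ => w j) Filter.atTop (𝓝[>] (0:ℝ)) := by
    rw [tendsto_nhdsWithin_iff]
    constructor
    · exact tendsto_pow_atTop_nhds_zero_of_lt_one (by norm_num) (by norm_num)
    · exact Filter.Eventually.of_forall (fun j => w_pos j)
  refine hmap.frequently (((H ε hε)).mono ?_)
  rintro j ⟨hj1, hcap, hb⟩
  have hlog2 : 0 < Real.log 2 := Real.log_pos (by norm_num)
  have hden : |Real.log (w j)| = (j:ℝ) * Real.log 2 := abs_log_w
  have hdenpos : 0 < (j:ℝ) * Real.log 2 := by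
    have : (1:ℝ) ≤ (j:ℝ) := by exact_mod_cast hj1
    nlinarith
  have hnum : (capacity (w j) E).log ≤ ((b j * Real.log 2 : ℝ) : EReal) := by
    rw [← log_two_pow]
    exact ENNReal.log_monotone hcap
  have hstep : (capacity (w j) E).log / ((|Real.log (w j)| : ℝ) : EReal) ≤
      (((b j * Real.log 2)/|Real.log (w j)| : ℝ) : EReal) := by
    rw [EReal.coe_div]
    exact EReal.div_le_div_right_of_nonneg (by exact_mod_cast (abs_nonneg _)) hnum
  refine le_trans hstep ?_
  rw [EReal.coe_le_coe_iff, hden, div_le_iff₀ hdenpos]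
  calc (b j : ℝ) * Real.log 2 ≤ ((β + ε) * j) * Real.log 2 := by nlinarith
    _ = (β + ε) * ((j:ℝ) * Real.log 2) := by ring

lemma lbdim_nonneg {E : Set ℝ} (hE : E.Nonempty) : (0 : EReal) ≤ lbdim E := by
  refine Filter.le_liminf_of_le (by isBoundedDefault) ?_
  have hev1 : Set.Ioo (0:ℝ) 1 ∈ 𝓝[>] (0:ℝ) :=
    Ioo_mem_nhdsGT_of_mem (by constructor <;> norm_num)
  filter_upwards [hev1] with δ hδ
  obtain ⟨x, hx⟩ := hE
  refine EReal.div_nonneg ?_ (by exact_mod_cast abs_nonneg (Real.log δ))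
  rw [ENNReal.zero_le_log_iff]
  exact one_le_capacity hx

lemma val_continuous : Continuous val := by
  rw [continuous_iff_continuousAt]
  intro ε
  rw [ContinuousAt, Metric.tendsto_nhds]
  intro η hη
  obtain ⟨d, hd⟩ := exists_pow_lt_of_lt_one hη (by norm_num : (1/2:ℝ) < 1)
  have hUopen : IsOpen {ε' : ℕ → Bool | ∀ i ∈ Finset.Iic d, ε' i = ε i} := by
    have heq : {ε' : ℕ → Bool | ∀ i ∈ Finset.Iic d, ε' i = ε i} =
        ⋂ i ∈ Finset.Iic d, (fun ε' : ℕ → Bool => ε' i) ⁻¹' {ε i} := by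
      ext ε'; simp [Set.mem_iInter]
    rw [heq]
    exact isOpen_biInter_finset (fun i _ =>
      (continuous_apply i).isOpen_preimage _ (isOpen_discrete _))
  have hU : {ε' : ℕ → Bool | ∀ i ∈ Finset.Iic d, ε' i = ε i} ∈ 𝓝 ε :=
    hUopen.mem_nhds (fun i _ => rfl)
  filter_upwards [hU] with ε' hε'
  have := val_dist_le (ε := ε') (ε' := ε) (d := d) (fun i hid => hε' i (Finset.mem_Iic.2 hid))
  rw [Real.dist_eq]
  calc |val ε' - val ε| ≤ w d := this
    _ < η := hd

lemma isCompact_piece (k : ℕ) : IsCompact (piece k) := by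
  have hS : IsClosed {ε : ℕ → Bool | ∀ i, ε i = true → Ak k i} := by
    have heq : {ε : ℕ → Bool | ∀ i, ε i = true → Ak k i} =
        ⋂ i, {ε : ℕ → Bool | ε i = true → Ak k i} := by
      ext ε'; simp [Set.mem_iInter]
    rw [heq]
    refine isClosed_iInter (fun i => ?_)
    by_cases h : Ak k i
    · have : {ε : ℕ → Bool | ε i = true → Ak k i} = Set.univ := by
        ext ε'; simp [h]
      rw [this]; exact isClosed_univ
    · have : {ε : ℕ → Bool | ε i = true → Ak k i} =
          (fun ε : ℕ → Bool => ε i) ⁻¹' {false} := by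
        ext ε'
        simp only [Set.mem_setOf_eq, Set.mem_preimage, Set.mem_singleton_iff]
        constructor
        · intro hc
          cases hb : ε' i
          · rfl
          · exact absurd (hc hb) h
        · intro hc hb
          rw [hc] at hb
          exact absurd hb (by simp)
      rw [this]
      exact IsClosed.preimage (continuous_apply i) (isClosed_discrete _)
  have hcomp : IsCompact {ε : ℕ → Bool | ∀ i, ε i = true → Ak k i} := hS.isCompact
  exact hcomp.image (continuous_const.add val_continuous)

lemma piece_subset_unit {k : ℕ} (hk : 1 ≤ k) : piece k ⊆ Set.Icc 0 1 := by
  refine Set.Subset.trans piece_subset_Icc ?_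
  intro x hx
  have h1 : w (k+1) ≤ w k := w_anti (by omega)
  have h2 : w k ≤ w 1 := w_anti hk
  have h3 : w 1 = 1/2 := by rw [w]; norm_num
  exact ⟨by linarith [hx.1, w_pos k], by linarith [hx.2]⟩

lemma XX_eq_iInter : XX = ⋂ N, (Set.Icc 0 (w N) ∪ ⋃ m ∈ Finset.Icc 1 N, piece m) := by
  ext x
  constructor
  · intro hx
    refine Set.mem_iInter.2 fun N => ?_
    rcases hx with h0 | hp
    · exact Or.inl ⟨le_of_eq h0.symm, by rw [h0]; exact (w_pos N).le⟩
    · obtain ⟨k, hk⟩ := Set.mem_iUnion.1 hp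
      by_cases hkN : k + 1 ≤ N
      · exact Or.inr (Set.mem_biUnion (Finset.mem_Icc.2 ⟨by omega, hkN⟩) hk)
      · left
        have hx' := piece_subset_Icc hk
        have h1 : w (k+1) + w (k+2) ≤ w k := by
          have e1 : w (k+1) = w k * (1/2) := by rw [w, w, pow_succ]
          have e2 : w (k+2) = w k * (1/2) * (1/2) := by rw [w, w, pow_succ, pow_succ]
          nlinarith [w_pos k]
        have h2 : w k ≤ w N := w_anti (by omega)
        exact ⟨by linarith [hx'.1, w_pos (k+1)], by linarith [hx'.2]⟩
  · intro hx
    by_cases h0 : x = 0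
    · exact Or.inl h0
    · have hpos : ∀ N, x ∈ Set.Icc (0:ℝ) (w N) → False → False := fun _ _ h => h
      -- find N that puts x in a piece
      have hxx : ∃ N, x ∉ Set.Icc (0:ℝ) (w N) ∨ x ∈ ⋃ m ∈ Finset.Icc 1 N, piece m := by
        by_cases hall : ∀ N, x ∈ Set.Icc (0:ℝ) (w N)
        · exfalso
          have hx0 : 0 ≤ x := (hall 0).1
          have hxpos : 0 < x := lt_of_le_of_ne hx0 (Ne.symm h0)
          obtain ⟨N, hN⟩ := exists_pow_lt_of_lt_one hxpos (by norm_num : (1/2:ℝ) < 1)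
          have := (hall N).2
          rw [w] at this
          linarith
        · push_neg at hall
          obtain ⟨N, hN⟩ := hall
          have := Set.mem_iInter.1 hx N
          rcases this with h | h
          · exact absurd h hN
          · exact ⟨N, Or.inr h⟩
      obtain ⟨N, hN⟩ := hxx
      have hx2 := Set.mem_iInter.1 hx N
      have hxp : x ∈ ⋃ m ∈ Finset.Icc 1 N, piece m := by
        rcases hN with h | h
        · rcases hx2 with h2 | h2
          · exact absurd h2 h
          · exact h2
        · exact h
      obtain ⟨m, hm, hxm⟩ := Set.mem_iUnion₂.1 hxp
      right
      rw [Set.mem_iUnion]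
      refine ⟨m - 1, ?_⟩
      have : m - 1 + 1 = m := by
        have := (Finset.mem_Icc.1 hm).1
        omega
      rw [this]
      exact hxm

lemma isClosed_XX : IsClosed XX := by
  rw [XX_eq_iInter]
  refine isClosed_iInter (fun N => IsClosed.union isClosed_Icc ?_)
  exact Set.Finite.isClosed_biUnion (Finset.finite_toSet _)
    (fun m _ => (isCompact_piece m).isClosed)

lemma XX_subset_unit : XX ⊆ Set.Icc 0 1 := by
  rintro x (h0 | hp)
  · rw [h0]; exact ⟨le_refl 0, by norm_num⟩
  · obtain ⟨k, hk⟩ := Set.mem_iUnion.1 hp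
    exact piece_subset_unit (by omega) hk

lemma isCompact_XX : IsCompact XX :=
  IsCompact.of_isClosed_subset isCompact_Icc isClosed_XX XX_subset_unit

/-- Baire category: a countable cover of a piece is somewhere dense in a cylinder. -/
lemma baire_piece (k : ℕ) (A : ℕ → Set ℝ) (hcov : piece k ⊆ ⋃ n, A n) :
    ∃ n : ℕ, ∃ ε : ℕ → Bool, (∀ i, ε i = true → Ak k i) ∧ ∃ d : ℕ,
      ∀ z ∈ piece k, |z - (w k + val ε)| ≤ w d → z ∈ closure (A n) := by
  have hcpt : IsCompact (piece k) := isCompact_piece k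
  haveI : CompactSpace ↥(piece k) := isCompact_iff_compactSpace.1 hcpt
  haveI : Nonempty ↥(piece k) := ⟨⟨w k, piece_nonempty k⟩⟩
  set f : ℕ → Set ↥(piece k) := fun n => Subtype.val ⁻¹' (closure (A n)) with hf
  have hfc : ∀ n, IsClosed (f n) := fun n =>
    IsClosed.preimage continuous_subtype_val isClosed_closure
  have hfU : ⋃ n, f n = Set.univ := by
    ext x
    simp only [Set.mem_iUnion, Set.mem_univ, iff_true]
    obtain ⟨n, hn⟩ := Set.mem_iUnion.1 (hcov x.2)
    exact ⟨n, subset_closure hn⟩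
  obtain ⟨n, hn⟩ := nonempty_interior_of_iUnion_of_closed hfc hfU
  obtain ⟨x, hx⟩ := hn
  obtain ⟨r, hr, hball⟩ := Metric.mem_nhds_iff.1 (mem_interior_iff_mem_nhds.1 hx)
  obtain ⟨ε, hε, hval⟩ := x.2
  obtain ⟨d, hd⟩ := exists_pow_lt_of_lt_one hr (by norm_num : (1/2:ℝ) < 1)
  refine ⟨n, ε, hε, d, fun z hz hclose => ?_⟩
  have hval' : w k + val ε = (x : ℝ) := hval
  have hzx : dist (⟨z, hz⟩ : ↥(piece k)) x < r := by
    rw [Subtype.dist_eq, Real.dist_eq, ← hval']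
    show |z - (w k + val ε)| < r
    calc |z - (w k + val ε)| ≤ w d := hclose
      _ < r := by rw [w]; exact hd
  have := hball (Metric.mem_ball.2 hzx)
  exact this

/-! ### lbdim of a single piece is 0 -/

lemma lbdim_piece_le (k : ℕ) (hk : 1 ≤ k) : lbdim (piece k) ≤ (0 : EReal) := by
  have h0 : ((0:ℝ) : EReal) = (0 : EReal) := rfl
  rw [← h0]
  refine lbdim_le (piece k) 0 (cnt k) (fun ε hε => ?_)
  rw [Filter.frequently_atTop]
  intro a
  -- choose T with (1/2)^(2T) < ε
  obtain ⟨T0, hT0⟩ := exists_pow_lt_of_lt_one hε (by norm_num : (1/2:ℝ) < 1)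
  obtain ⟨t, ht, hrt⟩ := rho_freq k hk (max (max a (k+1)) T0)
  have hta : a ≤ t := le_trans (le_max_left _ _) (le_trans (le_max_left _ _) ht)
  have htk : k + 1 ≤ t := le_trans (le_max_right _ _) (le_trans (le_max_left _ _) ht)
  have htT : T0 ≤ t := le_trans (le_max_right _ _) ht
  refine ⟨tau (t+1), le_trans hta (le_trans (le_of_lt (lt_tau_self t)) (tau_monotone (by omega))), ?_, ?_, ?_⟩
  · exact le_trans (by omega) (tau_pos (t+1))
  · exact capacity_piece_le
  · -- (cnt k (tau (t+1)) : ℝ) ≤ (0 + ε) * tau (t+1)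
    have hc := cnt_dip hrt htk
    have hcR : (cnt k (tau (t+1)) : ℝ) ≤ (tau t : ℝ) + 1 := by exact_mod_cast hc
    have htau : (tau (t+1) : ℝ) = (2:ℝ)^((t+1)^2) := by
      rw [tau]; push_cast; ring
    have htau' : (tau t : ℝ) = (2:ℝ)^(t^2) := by
      rw [tau]; push_cast; ring
    have hsplit : (2:ℝ)^((t+1)^2) = (2:ℝ)^(t^2) * (2:ℝ)^(2*t) * 2 := by
      rw [show (t+1)^2 = t^2 + 2*t + 1 by ring, pow_add, pow_add, pow_one]
    have hone : (1:ℝ) ≤ (2:ℝ)^(t^2) := one_le_pow₀ (by norm_num)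
    have hsmall : (1:ℝ) ≤ ε * (2:ℝ)^(2*t) := by
      have h1 : ((1:ℝ)/2)^(2*t) ≤ (1/2)^(2*T0) :=
        pow_le_pow_of_le_one (by norm_num) (by norm_num) (by omega)
      have h2 : ((1:ℝ)/2)^(2*T0) ≤ (1/2)^T0 :=
        pow_le_pow_of_le_one (by norm_num) (by norm_num) (by omega)
      have h3 : ((1:ℝ)/2)^(2*t) * (2:ℝ)^(2*t) = 1 := by
        rw [div_pow, one_pow]
        field_simp
      nlinarith [pow_pos (show (0:ℝ) < 2 by norm_num) (2*t), hT0]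
    rw [zero_add, htau, hsplit]
    have hcR' : (cnt k (tau (t + 1)) : ℝ) ≤ (2:ℝ)^(t^2) + 1 := by
      rw [← htau']
      exact hcR
    have hkey : (2:ℝ)^(t^2) * 1 ≤ (2:ℝ)^(t^2) * (ε * 2^(2*t)) :=
      mul_le_mul_of_nonneg_left hsmall (pow_nonneg (by norm_num) _)
    nlinarith [hone, hcR', hkey]

lemma lbdim_singleton_le : lbdim ({0} : Set ℝ) ≤ (0 : EReal) := by
  have h0 : ((0:ℝ) : EReal) = (0 : EReal) := rfl
  rw [← h0]
  refine lbdim_le {0} 0 (fun _ => 0) (fun ε hε => Filter.Eventually.frequently ?_)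
  filter_upwards [Filter.eventually_ge_atTop 1] with j hj
  refine ⟨hj, ?_, ?_⟩
  · have h1 : capacity (w j) ({0}:Set ℝ) ≤ 1 := capacity_le_one (by
      intro x hx y hy
      rw [Set.mem_singleton_iff] at hx hy
      rw [hx, hy]
      simpa using (w_pos j).le)
    simpa using h1
  · have := mul_nonneg (by linarith : (0:ℝ) ≤ 0 + ε) (Nat.cast_nonneg (α := ℝ) j)
    simpa using this

/-! ### lpdim XX = 0 -/

/-- The covering family. -/
def Ac : ℕ → Set ℝ := fun n => match n with
  | 0 => {0}
  | (m+1) => piece (m+1)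

lemma XX_subset_Ac : XX ⊆ ⋃ n, Ac n := by
  rintro x (h0 | hp)
  · exact Set.mem_iUnion.2 ⟨0, h0⟩
  · obtain ⟨k, hk⟩ := Set.mem_iUnion.1 hp
    exact Set.mem_iUnion.2 ⟨k+1, hk⟩

lemma zero_mem_XX : (0:ℝ) ∈ XX := Or.inl rfl

lemma lpdim_XX : lpdim XX = (0 : EReal) := by
  refine le_antisymm ?_ ?_
  · refine le_trans (iInf₂_le Ac XX_subset_Ac) (iSup_le (fun n => ?_))
    match n with
    | 0 => exact lbdim_singleton_le
    | (m+1) => exact lbdim_piece_le (m+1) (by omega)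
  · refine le_iInf₂ (fun A hA => ?_)
    obtain ⟨n, hn⟩ := Set.mem_iUnion.1 (hA zero_mem_XX)
    exact le_trans (lbdim_nonneg ⟨0, hn⟩) (le_iSup (fun n => lbdim (A n)) n)

/-! ### lbdim XX = 1 -/

lemma nat_cast_sub_ge (a b : ℕ) : (a:ℝ) - (b:ℝ) ≤ ((a - b : ℕ) : ℝ) := by
  rcases le_or_gt b a with h | h
  · rw [Nat.cast_sub h]
  · have h1 : a - b = 0 := by omega
    have h2 : (a:ℝ) ≤ (b:ℝ) := by exact_mod_cast h.le
    rw [h1]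
    simp
    linarith

lemma nat_cast_div2_ge (y : ℕ) : ((y:ℝ) - 1)/2 ≤ ((y/2 : ℕ):ℝ) := by
  have h : y ≤ 2 * (y/2) + 1 := by omega
  have h2 : (y:ℝ) ≤ 2 * ((y/2 : ℕ):ℝ) + 1 := by exact_mod_cast h
  linarith

lemma logb_two_pow (n : ℕ) : Real.logb 2 ((2:ℝ)^n) = n := by
  rw [Real.logb, Real.log_pow]
  have : Real.log 2 ≠ 0 := ne_of_gt (Real.log_pos (by norm_num))
  field_simp

lemma natlog_le_logb (m : ℕ) (hm : 1 ≤ m) : (Nat.log 2 m : ℝ) ≤ Real.logb 2 m := by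
  have h1 : (2:ℕ)^(Nat.log 2 m) ≤ m := Nat.pow_log_le_self 2 (by omega)
  have h2 : ((2:ℝ))^(Nat.log 2 m) ≤ (m:ℝ) := by exact_mod_cast h1
  have h3 : Real.logb 2 ((2:ℝ)^(Nat.log 2 m)) ≤ Real.logb 2 m :=
    Real.logb_le_logb_of_le (by norm_num) (by positivity) h2
  rwa [logb_two_pow] at h3

lemma natlog_div_tendsto :
    Filter.Tendsto (fun j : ℕ => (Nat.log 2 j : ℝ)/(j:ℝ)) Filter.atTop (𝓝 0) := by
  have hlog : Filter.Tendsto (fun x : ℝ => Real.log x / x) Filter.atTop (𝓝 0) :=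
    Real.isLittleO_log_id_atTop.tendsto_div_nhds_zero
  have hcomp : Filter.Tendsto (fun j : ℕ => Real.log j / (j:ℝ)) Filter.atTop (𝓝 0) :=
    hlog.comp tendsto_natCast_atTop_atTop
  have hup : Filter.Tendsto (fun j : ℕ => (1/Real.log 2) * (Real.log j / (j:ℝ)))
      Filter.atTop (𝓝 0) := by
    have := hcomp.const_mul (1/Real.log 2)
    simpa using this
  refine tendsto_of_tendsto_of_tendsto_of_le_of_le' tendsto_const_nhds hup ?_ ?_
  · exact Filter.Eventually.of_forall (fun j => by positivity)
  · filter_upwards [Filter.eventually_ge_atTop 1] with j hj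
    have h1 : (Nat.log 2 j : ℝ) ≤ Real.log j / Real.log 2 := natlog_le_logb j hj
    have hlog2 : 0 < Real.log 2 := Real.log_pos (by norm_num)
    have hjpos : (0:ℝ) < j := by exact_mod_cast hj
    rw [div_le_iff₀ hjpos]
    calc (Nat.log 2 j : ℝ) ≤ Real.log j / Real.log 2 := h1
      _ = (1/Real.log 2 * (Real.log j / j)) * j := by field_simp
      _ ≤ _ := le_of_eq (by ring)

lemma ep_le_natlog {m : ℕ} (hm : 2 ≤ m) : ep m ≤ Nat.log 2 m := by
  have h1 : 2^(ep m) ≤ m := by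
    have h2 : (2:ℕ)^(ep m) ≤ 2^((ep m)^2) := Nat.pow_le_pow_right (by norm_num)
      (Nat.le_self_pow (by omega) _)
    have h3 : 2^((ep m)^2) < m := ep_spec hm
    omega
  exact (Nat.le_log_iff_pow_le (by norm_num) (by omega)).2 h1

lemma natlog_small (ε : ℝ) (hε : 0 < ε) :
    ∀ᶠ j : ℕ in Filter.atTop, (Nat.log 2 j : ℝ) ≤ ε * j := by
  have := natlog_div_tendsto.eventually (eventually_le_nhds (show (0:ℝ) < ε from hε))
  filter_upwards [this, Filter.eventually_ge_atTop 1] with j h1 h2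
  have hjpos : (0:ℝ) < j := by exact_mod_cast h2
  calc (Nat.log 2 j : ℝ) = ((Nat.log 2 j : ℝ)/j) * j := by field_simp
    _ ≤ ε * j := by
      have : (Nat.log 2 j : ℝ)/j ≤ ε := h1
      nlinarith

lemma piece_subset_XX {k : ℕ} (hk : 1 ≤ k) : piece k ⊆ XX := by
  intro x hx
  right
  exact Set.mem_iUnion.2 ⟨k - 1, by rwa [show k - 1 + 1 = k by omega]⟩

lemma lbdim_XX_le : lbdim XX ≤ ((1:ℝ) : EReal) := by
  refine lbdim_le XX 1 (fun j => j + 1) (fun ε hε => Filter.Eventually.frequently ?_)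
  filter_upwards [Filter.eventually_ge_atTop (max 1 (⌈1/ε⌉₊ + 1))] with j hj
  have hj1 : 1 ≤ j := le_trans (le_max_left _ _) hj
  refine ⟨hj1, ?_, ?_⟩
  · have h1 : capacity (w j) XX ≤ ((⌊((1:ℝ) - 0)/w j⌋₊ + 1 : ℕ) : ℝ≥0∞) :=
      capacity_Icc_le (w_pos j) (by norm_num) XX_subset_unit
    have h2 : ((1:ℝ) - 0)/w j = ((2^j : ℕ) : ℝ) := by
      rw [w]
      push_cast
      rw [div_pow, one_pow]
      field_simp
      norm_num
    rw [h2, Nat.floor_natCast] at h1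
    refine le_trans h1 ?_
    have h3 : 2^j + 1 ≤ 2^(j+1) := by
      have : 1 ≤ 2^j := Nat.one_le_two_pow
      rw [pow_succ]
      omega
    calc ((2^j + 1 : ℕ) : ℝ≥0∞) ≤ ((2^(j+1) : ℕ) : ℝ≥0∞) := by exact_mod_cast h3
      _ = (2:ℝ≥0∞)^(j+1) := by push_cast; rfl
  · have hceil : (1:ℝ)/ε ≤ (⌈1/ε⌉₊ : ℝ) := Nat.le_ceil _
    have hjc : (⌈1/ε⌉₊ + 1 : ℝ) ≤ (j:ℝ) := by
      have := le_trans (le_max_right _ _) hj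
      exact_mod_cast this
    have hεj : 1 ≤ ε * j := by
      rw [div_le_iff₀ hε] at hceil
      nlinarith
    push_cast
    nlinarith

lemma lbdim_XX_ge : ((1:ℝ) : EReal) ≤ lbdim XX := by
  refine lbdim_ge XX 1 (fun j => (j-1) - (ep (j-1) + 1)) ?_ ?_
  · filter_upwards [Filter.eventually_ge_atTop 4] with j hj
    set e := ep (j-1) with he
    have hj1 : 2 ≤ j - 1 := by omega
    have he1 : 1 ≤ e := ep_ge (by rw [show tau 1 = 2 from rfl]; omega)
    have hcnt : (j-1) - (e+1) ≤ cntW e (e+1) (j-1) :=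
      cntW_subset_full (le_refl (e+1)) (ep_ub hj1)
    calc (2:ℝ≥0∞)^((j-1) - (e + 1))
        ≤ (2:ℝ≥0∞)^(cntW e (e+1) (j-1)) := by
          exact pow_le_pow_right₀ (by norm_num) hcnt
      _ ≤ capacity (w j) (piece e) := capacity_piece_ge (by omega) (fun _ => false)
          (fun i hi => absurd hi (by simp))
      _ ≤ capacity (w j) XX := capacity_mono (piece_subset_XX he1)
  · intro ε hε
    filter_upwards [natlog_small (ε/2) (by linarith), Filter.eventually_ge_atTop
      (max 4 ⌈8/ε⌉₊)] with j hlog hj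
    have hj4 : 4 ≤ j := le_trans (le_max_left _ _) hj
    have hj8 : (8:ℝ)/ε ≤ j := by
      have h := le_trans (le_max_right _ _) hj
      calc (8:ℝ)/ε ≤ (⌈8/ε⌉₊ : ℝ) := Nat.le_ceil _
        _ ≤ (j:ℝ) := by exact_mod_cast h
    have hεj : 8 ≤ ε * j := by
      rw [div_le_iff₀ hε] at hj8
      linarith
    have hep : (ep (j-1) : ℝ) ≤ (ε/2) * j := by
      have h1 : ep (j-1) ≤ Nat.log 2 (j-1) := ep_le_natlog (by omega)
      have h2 : Nat.log 2 (j-1) ≤ Nat.log 2 j := Nat.log_mono_right (by omega)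
      calc (ep (j-1) : ℝ) ≤ (Nat.log 2 j : ℝ) := by exact_mod_cast le_trans h1 h2
        _ ≤ (ε/2) * j := hlog
    have hc1 : ((j-1 : ℕ):ℝ) - ((ep (j-1) + 1 : ℕ):ℝ) ≤ (((j-1) - (ep (j-1) + 1) : ℕ) : ℝ) :=
      nat_cast_sub_ge _ _
    have hc2 : ((j-1:ℕ):ℝ) = (j:ℝ) - 1 := by
      rw [Nat.cast_sub (by omega)]
      norm_num
    push_cast at hc1
    rw [hc2] at hc1
    refine le_trans ?_ hc1
    have hεnn : 0 ≤ ε := hε.le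
    nlinarith

lemma lbdim_XX : lbdim XX = (1 : EReal) := by
  have h : ((1:ℝ) : EReal) = (1 : EReal) := by norm_num
  rw [← h]
  exact le_antisymm lbdim_XX_le lbdim_XX_ge

/-! ### dpdim upper bound via the exhaustion Dn -/

def Dn (n : ℕ) : Set ℝ := {0} ∪ ⋃ m ∈ Finset.Icc 1 n, piece m

lemma Dn_monotone : Monotone Dn := by
  intro a b hab x hx
  rcases hx with h0 | hp
  · exact Or.inl h0
  · obtain ⟨m, hm, hxm⟩ := Set.mem_iUnion₂.1 hp
    rw [Finset.mem_Icc] at hm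
    exact Or.inr (Set.mem_biUnion (Finset.mem_Icc.2 ⟨hm.1, le_trans hm.2 hab⟩) hxm)

lemma Dn_union : (⋃ n, Dn n) = XX := by
  ext x
  constructor
  · intro hx
    obtain ⟨n, hn⟩ := Set.mem_iUnion.1 hx
    rcases hn with h0 | hp
    · exact Or.inl h0
    · obtain ⟨m, hm, hxm⟩ := Set.mem_iUnion₂.1 hp
      rw [Finset.mem_Icc] at hm
      exact piece_subset_XX hm.1 hxm
  · rintro (h0 | hp)
    · exact Set.mem_iUnion.2 ⟨0, Or.inl h0⟩
    · obtain ⟨k, hk⟩ := Set.mem_iUnion.1 hp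
      exact Set.mem_iUnion.2 ⟨k+1, Or.inr (Set.mem_biUnion
        (Finset.mem_Icc.2 ⟨by omega, le_refl _⟩) hk)⟩

lemma capacity_Dn_le (n j : ℕ) :
    capacity (w j) (Dn n) ≤ (2:ℝ≥0∞)^(j/2 + (tau (n+1) + n + 3)) := by
  have h1 : capacity (w j) (Dn n) ≤ capacity (w j) ({0}:Set ℝ) +
      ∑ m ∈ Finset.Icc 1 n, capacity (w j) (piece m) :=
    le_trans capacity_union_le (add_le_add le_rfl (capacity_biUnion_le _ _))
  have h2 : capacity (w j) ({0}:Set ℝ) ≤ 1 := capacity_le_one (by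
    intro x hx y hy
    rw [Set.mem_singleton_iff] at hx hy
    rw [hx, hy]
    simpa using (w_pos j).le)
  set s := j/2 + tau (n+1) + 2 with hs
  have h3 : ∀ m ∈ Finset.Icc 1 n, capacity (w j) (piece m) ≤ (2:ℝ≥0∞)^s := by
    intro m hm
    refine le_trans capacity_piece_le (pow_le_pow_right₀ (by norm_num) ?_)
    have hmn : tau (m+1) ≤ tau (n+1) := tau_monotone (by
      have := (Finset.mem_Icc.1 hm).2
      omega)
    have := cnt_le (k := m) (j := j)
    omega
  have h4 : ∑ m ∈ Finset.Icc 1 n, capacity (w j) (piece m) ≤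
      (n : ℝ≥0∞) * (2:ℝ≥0∞)^s := by
    calc ∑ m ∈ Finset.Icc 1 n, capacity (w j) (piece m)
        ≤ (Finset.Icc 1 n).card • (2:ℝ≥0∞)^s := Finset.sum_le_card_nsmul _ _ _ h3
      _ = (n : ℝ≥0∞) * (2:ℝ≥0∞)^s := by
          rw [Nat.card_Icc, nsmul_eq_mul, Nat.add_sub_cancel]
  have h5 : (n : ℝ≥0∞) ≤ (2:ℝ≥0∞)^n := by
    calc (n : ℝ≥0∞) ≤ ((2^n : ℕ) : ℝ≥0∞) := by exact_mod_cast (Nat.lt_two_pow_self (n := n)).le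
      _ = (2:ℝ≥0∞)^n := by push_cast; rfl
  have h6 : (1:ℝ≥0∞) ≤ (2:ℝ≥0∞)^s := one_le_two_pow_e
  calc capacity (w j) (Dn n) ≤ 1 + (n : ℝ≥0∞) * (2:ℝ≥0∞)^s := le_trans h1 (add_le_add h2 h4)
    _ ≤ (2:ℝ≥0∞)^s + (2:ℝ≥0∞)^n * (2:ℝ≥0∞)^s :=
        add_le_add h6 (mul_le_mul_left h5 _)
    _ = (2:ℝ≥0∞)^s * (1 + 2^n) := by ring
    _ ≤ (2:ℝ≥0∞)^s * (2^n + 2^n) := by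
        refine mul_le_mul_right (add_le_add ?_ le_rfl) _
        exact one_le_two_pow_e
    _ = (2:ℝ≥0∞)^(s + (n+1)) := by
        rw [pow_add]
        congr 1
        rw [pow_succ]
        ring
    _ = (2:ℝ≥0∞)^(j/2 + (tau (n+1) + n + 3)) := by
        congr 1
        omega

lemma lbdim_Dn_le (n : ℕ) : lbdim (Dn n) ≤ (((1:ℝ)/2) : EReal) := by
  refine lbdim_le _ (1/2) (fun j => j/2 + (tau (n+1) + n + 3))
    (fun ε hε => Filter.Eventually.frequently ?_)
  set C := tau (n+1) + n + 3 with hC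
  filter_upwards [Filter.eventually_ge_atTop (max 1 ⌈(C:ℝ)/ε⌉₊)] with j hj
  have hj1 : 1 ≤ j := le_trans (le_max_left _ _) hj
  refine ⟨hj1, capacity_Dn_le n j, ?_⟩
  have hjC : ((C:ℝ))/ε ≤ (j:ℝ) := by
    calc ((C:ℝ))/ε ≤ (⌈(C:ℝ)/ε⌉₊ : ℝ) := Nat.le_ceil _
      _ ≤ (j:ℝ) := by exact_mod_cast le_trans (le_max_right _ _) hj
  have hCj : (C:ℝ) ≤ ε * j := by
    rw [div_le_iff₀ hε] at hjC
    linarith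
  have hdiv : ((j/2 : ℕ) : ℝ) ≤ (j:ℝ)/2 := Nat.cast_div_le
  rw [hC] at hCj
  push_cast at hCj
  push_cast
  push_cast at hdiv
  have hC' : (C:ℝ) = (tau (n+1):ℝ) + n + 3 := by rw [hC]; push_cast; ring
  linarith

lemma dpdim_XX_le : dpdim XX ≤ (((1:ℝ)/2):EReal) :=
  le_trans (iInf₂_le Dn ⟨Dn_monotone, Dn_union⟩) (iSup_le fun n => lbdim_Dn_le n)

/-! ### dpdim lower bound -/

lemma pick3 (a b : ℕ) : ∃ k, 1 ≤ k ∧ k ≤ 3 ∧ k ≠ a ∧ k ≠ b := by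
  refine ⟨if a ≠ 1 ∧ b ≠ 1 then 1 else if a ≠ 2 ∧ b ≠ 2 then 2 else 3, ?_⟩
  split_ifs with h1 h2 <;> omega

lemma tau_ratio {t : ℕ} (ht : 1 ≤ t) : tau (t-1) * 2^(2*t-1) = tau t := by
  obtain ⟨s, rfl⟩ : ∃ s, t = s + 1 := ⟨t-1, by omega⟩
  simp only [Nat.add_sub_cancel, tau]
  rw [← pow_add]
  congr 1
  have h : 2*(s+1)-1 = 2*s+1 := by omega
  rw [h]
  ring

lemma dp_aux {kk d j n : ℕ} {A : ℕ → Set ℝ} (hk3 : kk ≤ 3)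
    (ε : ℕ → Bool) (hε : ∀ i, ε i = true → Ak kk i)
    (hball : ∀ z ∈ piece kk, |z - (w kk + val ε)| ≤ w d → z ∈ closure (A n))
    (hj : 3 ≤ j) (ht5 : 5 ≤ ep (j-1))
    (hr1 : rho (ep (j-1)) ≠ kk) (hr2 : rho (ep (j-1) - 1) ≠ kk) :
    (2:ℝ≥0∞)^(((j-1) - tau (ep (j-1) - 1))/2 - (d+1)) ≤ capacity (w j) (A n) := by
  have hcm : ((j-1) - tau (ep (j-1) - 1))/2 ≤ cnt kk (j-1) := by
    refine cnt_maintain (s := ep (j-1) - 1) (t := ep (j-1)) (by omega) (by omega) ?_ ?_ ?_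
    · intro u hu1 hu2
      have hu : u = ep (j-1) - 1 ∨ u = ep (j-1) := by omega
      rcases hu with h | h
      · rw [h]; exact hr2
      · rw [h]; exact hr1
    · exact ep_spec (show 2 ≤ j - 1 by omega)
    · exact ep_ub (show 2 ≤ j - 1 by omega)
  have hw : cnt kk (j-1) - (d+1) ≤ cntW kk d (j-1) := by
    have := cnt_le_cntW_add (k := kk) (d := d) (m := j-1)
    omega
  calc (2:ℝ≥0∞)^(((j-1) - tau (ep (j-1) - 1))/2 - (d+1))
      ≤ (2:ℝ≥0∞)^(cntW kk d (j-1)) := pow_le_pow_right₀ (by norm_num) (by omega)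
    _ ≤ capacity (w j) (A n) := capacity_closure_ge (by omega) ε hε hball

lemma dpdim_XX_ge : (((1:ℝ)/2):EReal) ≤ dpdim XX := by
  refine le_iInf₂ (fun A hA => ?_)
  obtain ⟨hmono, hU⟩ := hA
  have hcov : ∀ k, 1 ≤ k → piece k ⊆ ⋃ n, A n := fun k hk => by
    rw [hU]; exact piece_subset_XX hk
  obtain ⟨n1, ε1, hε1, d1, hb1⟩ := baire_piece 1 A (hcov 1 (by norm_num))
  obtain ⟨n2, ε2, hε2, d2, hb2⟩ := baire_piece 2 A (hcov 2 (by norm_num))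
  obtain ⟨n3, ε3, hε3, d3, hb3⟩ := baire_piece 3 A (hcov 3 (by norm_num))
  set n := max n1 (max n2 n3) with hn
  set D := max d1 (max d2 d3) with hD
  have hd1D : d1 ≤ D := le_max_left _ _
  have hd2D : d2 ≤ D := le_trans (le_max_left _ _) (le_max_right _ _)
  have hd3D : d3 ≤ D := le_trans (le_max_right _ _) (le_max_right _ _)
  have hcl : ∀ m, m ≤ n → closure (A m) ⊆ closure (A n) :=
    fun m hm => closure_mono (hmono hm)
  have hb1' : ∀ z ∈ piece 1, |z - (w 1 + val ε1)| ≤ w d1 → z ∈ closure (A n) :=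
    fun z hz h => hcl n1 (le_max_left _ _) (hb1 z hz h)
  have hb2' : ∀ z ∈ piece 2, |z - (w 2 + val ε2)| ≤ w d2 → z ∈ closure (A n) :=
    fun z hz h => hcl n2 (le_trans (le_max_left _ _) (le_max_right _ _)) (hb2 z hz h)
  have hb3' : ∀ z ∈ piece 3, |z - (w 3 + val ε3)| ≤ w d3 → z ∈ closure (A n) :=
    fun z hz h => hcl n3 (le_trans (le_max_right _ _) (le_max_right _ _)) (hb3 z hz h)
  refine le_trans ?_ (le_iSup (fun m => lbdim (A m)) n)
  refine lbdim_ge (A n) (1/2) (fun j => ((j-1) - tau (ep (j-1) - 1))/2 - (D+1)) ?_ ?_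
  · have hev : ∀ᶠ j : ℕ in Filter.atTop, 5 ≤ ep (j-1) :=
      (ep_tendsto.comp (Filter.tendsto_sub_atTop_nat 1)).eventually
        (Filter.eventually_ge_atTop 5)
    filter_upwards [hev, Filter.eventually_ge_atTop 3] with j h5 h3
    have hne : rho (ep (j-1) - 1) ≠ rho (ep (j-1)) := by
      have h := rho_ne_succ (t := ep (j-1) - 1) (by omega)
      rwa [show ep (j-1) - 1 + 1 = ep (j-1) by omega] at h
    obtain ⟨kk, hkk1, hkk3, hka, hkb⟩ := pick3 (rho (ep (j-1) - 1)) (rho (ep (j-1)))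
    have hmono2 : ∀ d', d' ≤ D →
        (2:ℝ≥0∞)^(((j-1) - tau (ep (j-1) - 1))/2 - (D+1)) ≤
        (2:ℝ≥0∞)^(((j-1) - tau (ep (j-1) - 1))/2 - (d'+1)) := by
      intro d' hd'
      exact pow_le_pow_right₀ (by norm_num) (by omega)
    interval_cases kk
    · exact le_trans (hmono2 d1 hd1D) (dp_aux (by norm_num) ε1 hε1 hb1' h3 h5
        (Ne.symm hkb) (Ne.symm hka))
    · exact le_trans (hmono2 d2 hd2D) (dp_aux (by norm_num) ε2 hε2 hb2' h3 h5
        (Ne.symm hkb) (Ne.symm hka))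
    · exact le_trans (hmono2 d3 hd3D) (dp_aux (by norm_num) ε3 hε3 hb3' h3 h5
        (Ne.symm hkb) (Ne.symm hka))
  · intro ε hε
    obtain ⟨T, hT⟩ := exists_pow_lt_of_lt_one hε (by norm_num : (1/2:ℝ) < 1)
    have hev : ∀ᶠ j : ℕ in Filter.atTop, max 5 T ≤ ep (j-1) :=
      (ep_tendsto.comp (Filter.tendsto_sub_atTop_nat 1)).eventually
        (Filter.eventually_ge_atTop (max 5 T))
    filter_upwards [hev, Filter.eventually_ge_atTop (max 3 ⌈(2*((D:ℝ)+3))/ε⌉₊)]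
      with j hepj hj
    have h5 : 5 ≤ ep (j-1) := le_trans (le_max_left _ _) hepj
    have hTep : T ≤ ep (j-1) := le_trans (le_max_right _ _) hepj
    have hj3 : 3 ≤ j := le_trans (le_max_left _ _) hj
    set t := ep (j-1) with htd
    -- tau (t-1) is small
    have hratio : tau (t-1) * 2^t ≤ j := by
      have h1 : tau (t-1) * 2^(2*t-1) = tau t := tau_ratio (by omega)
      have h2 : tau t < j - 1 := ep_spec (by omega)
      have h3 : (2:ℕ)^t ≤ 2^(2*t-1) := Nat.pow_le_pow_right (by norm_num) (by omega)
      have h4 : tau (t-1) * 2^t ≤ tau (t-1) * 2^(2*t-1) :=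
        Nat.mul_le_mul_left _ h3
      omega
    have htsmall : (tau (t-1) : ℝ) ≤ ε * j := by
      have h1 : (tau (t-1) : ℝ) * 2^t ≤ (j:ℝ) := by exact_mod_cast hratio
      have h2 : ((1:ℝ)/2)^t ≤ (1/2)^T :=
        pow_le_pow_of_le_one (by norm_num) (by norm_num) hTep
      have h3 : ((1:ℝ)/2)^t * 2^t = 1 := by
        rw [div_pow, one_pow]
        field_simp
      have hp2 : (0:ℝ) < 2^t := by positivity
      have h4 : (tau (t-1) : ℝ) ≤ (j:ℝ) / 2^t := by
        rw [le_div_iff₀ hp2]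
        exact h1
      have h5' : (j:ℝ)/2^t ≤ ε * j := by
        rw [div_le_iff₀ hp2]
        have hjnn : (0:ℝ) ≤ j := Nat.cast_nonneg j
        have h6 : (1:ℝ)/2^t ≤ ε := by
          have : ((1:ℝ)/2)^t = 1/2^t := by rw [div_pow, one_pow]
          rw [← this]
          linarith [h2, hT]
        have hstep := mul_le_mul_of_nonneg_right h6 (mul_nonneg hp2.le hjnn)
        calc (j:ℝ) = ((1:ℝ)/2^t) * (2^t * j) := by field_simp
          _ ≤ ε * (2^t * j) := hstep
          _ = ε * j * 2^t := by ring
      linarith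
    -- the cast chain
    have hDj : 2*((D:ℝ)+3) ≤ ε * j := by
      have h1 : (2*((D:ℝ)+3))/ε ≤ (⌈(2*((D:ℝ)+3))/ε⌉₊ : ℝ) := Nat.le_ceil _
      have h2 : (⌈(2*((D:ℝ)+3))/ε⌉₊ : ℝ) ≤ (j:ℝ) := by
        exact_mod_cast le_trans (le_max_right _ _) hj
      rw [div_le_iff₀ hε] at h1
      nlinarith
    have htle : tau (t-1) ≤ j - 1 := by
      have h2 : tau t < j - 1 := ep_spec (by omega)
      have h3 : tau (t-1) ≤ tau t := tau_monotone (by omega)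
      omega
    set X := (j-1) - tau (t-1) with hX
    have hc1 : ((j:ℝ) - 1) - (tau (t-1):ℝ) ≤ ((X : ℕ) : ℝ) := by
      rw [hX, Nat.cast_sub htle, Nat.cast_sub (by omega : 1 ≤ j)]
      push_cast
      linarith
    have hc2 : (((X:ℝ)) - 1)/2 ≤ ((X/2 : ℕ):ℝ) := nat_cast_div2_ge X
    have hc3 : ((X/2 : ℕ):ℝ) - ((D:ℝ)+1) ≤ ((X/2 - (D+1) : ℕ) : ℝ) := by
      have := nat_cast_sub_ge (X/2) (D+1)
      push_cast at this ⊢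
      linarith
    refine le_trans ?_ hc3
    have hfin : (1/2 - ε) * ((j:ℝ)+1) ≤ (((j:ℝ)-1) - (tau (t-1):ℝ) - 1)/2 - ((D:ℝ)+1) := by
      nlinarith [htsmall, hDj, hε.le]
    calc (1/2 - ε) * ((j:ℝ)+1) ≤ (((j:ℝ)-1) - (tau (t-1):ℝ) - 1)/2 - ((D:ℝ)+1) := hfin
      _ ≤ (((X:ℝ)) - 1)/2 - ((D:ℝ)+1) := by linarith [hc1]
      _ ≤ ((X/2 : ℕ):ℝ) - ((D:ℝ)+1) := by linarith [hc2]

lemma dpdim_XX : dpdim XX = (((1:ℝ)/2) : EReal) :=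
  le_antisymm dpdim_XX_le dpdim_XX_ge

end S17

/-- Example `ex:3x`. There is a compact set `X ⊆ ℝ` with
`lpdim X = 0`, `dpdim X = 1/2` and `lbdim X = 1`; in particular
`lpdim X < dpdim X < lbdim X`. -/
theorem stmt17 :
    ∃ X : Set ℝ, IsCompact X ∧ lpdim X = (0 : EReal) ∧
      dpdim X = ((1/2 : ℝ) : EReal) ∧ lbdim X = (1 : EReal) ∧
      lpdim X < dpdim X ∧ dpdim X < lbdim X := by
  have hhalf : (((1:ℝ)/2) : EReal) = ((1/2 : ℝ) : EReal) := rfl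
  refine ⟨S17.XX, S17.isCompact_XX, S17.lpdim_XX, by rw [← hhalf]; exact S17.dpdim_XX,
    S17.lbdim_XX, ?_, ?_⟩
  · rw [S17.lpdim_XX, S17.dpdim_XX]
    have h : ((0:ℝ):EReal) < (((1:ℝ)/2):EReal) := EReal.coe_lt_coe_iff.2 (by norm_num)
    simpa using h
  · rw [S17.dpdim_XX, S17.lbdim_XX]
    have h : (((1:ℝ)/2):EReal) < ((1:ℝ):EReal) := EReal.coe_lt_coe_iff.2 (by norm_num)
    simpa using h
end

section
/- Let μ and ν be finite Borel measures on metric spaces X and Y respectively, and let μ × ν be the product measure on X × Y with the maximum metric. Then: (i) updim(μ × ν) ≥ updim μ + lpdim ν; (ii) lpdim(μ × ν) ≥ lpdim μ + lpdim ν. -/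
open Filter MeasureTheory Set
open scoped ENNReal NNReal Topology

open Filter MeasureTheory Set ZPaper
open scoped ENNReal NNReal Topology
namespace ZAux

open Filter MeasureTheory Set ZPaper TopologicalSpace
open scoped ENNReal NNReal Topology

variable {X : Type*} [MetricSpace X] {Y : Type*} [MetricSpace Y]

/-! ### Capacity basics -/

lemma card_le_capacity {δ : ℝ} {E : Set X} {F : Finset X} (h1 : ↑F ⊆ E)
    (h2 : ∀ x ∈ F, ∀ y ∈ F, x ≠ y → δ < dist x y) :
    (F.card : ℝ≥0∞) ≤ capacity δ E :=
  le_iSup_of_le F (le_iSup_of_le ⟨h1, h2⟩ le_rfl)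

lemma capacity_le {δ : ℝ} {E : Set X} {c : ℝ≥0∞}
    (h : ∀ F : Finset X, ↑F ⊆ E → (∀ x ∈ F, ∀ y ∈ F, x ≠ y → δ < dist x y) →
      (F.card : ℝ≥0∞) ≤ c) :
    capacity δ E ≤ c :=
  iSup_le fun F => iSup_le fun hF => h F hF.1 hF.2

lemma capacity_empty (δ : ℝ) : capacity δ (∅ : Set X) = 0 := by
  refine le_antisymm (capacity_le fun F hF _ => ?_) zero_le
  have : F = ∅ := by
    ext x; simp only [Finset.notMem_empty, iff_false]
    intro hx; exact (hF hx).elim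
  simp [this]

lemma capacity_mono {δ : ℝ} {E E' : Set X} (h : E ⊆ E') : capacity δ E ≤ capacity δ E' :=
  capacity_le fun F hF1 hF2 => card_le_capacity (hF1.trans h) hF2

lemma capacity_anti {δ δ' : ℝ} {E : Set X} (h : δ' ≤ δ) : capacity δ E ≤ capacity δ' E :=
  capacity_le fun F hF1 hF2 =>
    card_le_capacity hF1 fun x hx y hy hxy => lt_of_le_of_lt h (hF2 x hx y hy hxy)

lemma one_le_capacity {δ : ℝ} {E : Set X} (h : E.Nonempty) : 1 ≤ capacity δ E := by
  obtain ⟨x, hx⟩ := h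
  have := card_le_capacity (δ := δ) (E := E) (F := {x}) (by simpa using hx)
    (fun a ha b hb hab => by
      simp only [Finset.mem_singleton] at ha hb
      exact absurd (ha.trans hb.symm) hab)
  simpa using this

lemma nonempty_of_capacity_ne_zero {δ : ℝ} {E : Set X} (h : capacity δ E ≠ 0) : E.Nonempty := by
  rcases E.eq_empty_or_nonempty with rfl | hne
  · exact absurd (capacity_empty δ) h
  · exact hne

lemma exists_sep_finset {δ : ℝ} {E : Set X} {n : ℕ} (h : (n : ℝ≥0∞) ≤ capacity δ E) :
    ∃ F : Finset X, ↑F ⊆ E ∧ (∀ x ∈ F, ∀ y ∈ F, x ≠ y → δ < dist x y) ∧ n ≤ F.card := by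
  rcases Nat.eq_zero_or_pos n with rfl | hn
  · exact ⟨∅, by simp, by simp, by simp⟩
  by_contra h'
  push_neg at h'
  have hle : capacity δ E ≤ ((n - 1 : ℕ) : ℝ≥0∞) := capacity_le fun F hF1 hF2 => by
    exact_mod_cast Nat.le_sub_one_of_lt (h' F hF1 hF2)
  have : (n : ℝ≥0∞) ≤ ((n - 1 : ℕ) : ℝ≥0∞) := h.trans hle
  rw [Nat.cast_le] at this
  omega

lemma capacity_closure_le {δ δ' : ℝ} {E : Set X} (h0 : 0 < δ') (h : δ' < δ) :
    capacity δ (closure E) ≤ capacity δ' E := by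
  classical
  refine capacity_le fun F hF1 hF2 => ?_
  set ε := (δ - δ') / 2 with hε
  have hεpos : 0 < ε := by simp only [hε]; linarith
  have hch : ∀ x, x ∈ F → ∃ y, y ∈ E ∧ dist x y < ε := by
    intro x hx
    obtain ⟨y, hy, hd⟩ := Metric.mem_closure_iff.1 (hF1 hx) ε hεpos
    exact ⟨y, hy, hd⟩
  choose! g hgE hgd using hch
  have hinj : Set.InjOn g ↑F := by
    intro x hx y hy hxy
    by_contra hne
    have h1 : δ < dist x y := hF2 x hx y hy hne
    have h2 : dist x y ≤ dist x (g x) + dist (g x) y := dist_triangle _ _ _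
    have h3 : dist (g x) y = dist y (g y) := by rw [hxy, dist_comm]
    have := hgd x hx
    have := hgd y hy
    have hδδ : 0 < δ' := h0
    rw [h3] at h2
    have : dist x y < 2 * ε := by linarith
    rw [hε] at this
    linarith
  have hcard : (F.image g).card = F.card := Finset.card_image_of_injOn hinj
  refine le_trans ?_ (card_le_capacity (F := F.image g) ?_ ?_)
  · rw [hcard]
  · intro z hz
    simp only [Finset.coe_image, Set.mem_image, Finset.mem_coe] at hz
    obtain ⟨x, hx, rfl⟩ := hz
    exact hgE x hx
  · intro a ha b hb hab
    simp only [Finset.mem_image] at ha hb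
    obtain ⟨x, hx, rfl⟩ := ha
    obtain ⟨y, hy, rfl⟩ := hb
    have hne : x ≠ y := fun hxy => hab (by rw [hxy])
    have h1 : δ < dist x y := hF2 x hx y hy hne
    have h2 : dist x y ≤ dist x (g x) + dist (g x) (g y) + dist (g y) y := by
      have := dist_triangle x (g x) y
      have := dist_triangle (g x) (g y) y
      linarith
    have h3 : dist (g y) y = dist y (g y) := dist_comm _ _
    have := hgd x hx
    have := hgd y hy
    rw [h3] at h2
    have : δ - 2 * ε < dist (g x) (g y) := by linarith
    rw [hε] at this
    linarith

lemma capacity_prod_sect {G : Set (X × Y)} {S : Set X} {δ : ℝ} {n : ℕ}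
    (h : ∀ x ∈ S, (n : ℝ≥0∞) ≤ capacity δ (sect G x)) :
    capacity δ S * (n : ℝ≥0∞) ≤ capacity δ G := by
  classical
  rw [show capacity δ S = ⨆ (F : Finset X) (_ : ↑F ⊆ S ∧ ∀ x ∈ F, ∀ y ∈ F, x ≠ y → δ < dist x y),
    (F.card : ℝ≥0∞) from rfl, ENNReal.iSup_mul]
  refine iSup_le fun F => ?_
  rw [ENNReal.iSup_mul]
  refine iSup_le fun hF => ?_
  have hx : ∀ x : F, ∃ T : Finset Y, ↑T ⊆ sect G (x : X) ∧
      (∀ a ∈ T, ∀ b ∈ T, a ≠ b → δ < dist a b) ∧ n ≤ T.card := by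
    intro x
    exact exists_sep_finset (h x (hF.1 x.2))
  choose T hT1 hT2 hT3 using hx
  set U : Finset (X × Y) := F.attach.biUnion (fun x => (T x).image (fun y => ((x : X), y))) with hU
  have hUsub : ↑U ⊆ G := by
    intro p hp
    simp only [hU, Finset.coe_biUnion, Finset.mem_coe, Finset.mem_attach, Set.mem_iUnion,
      Finset.coe_image, Set.mem_image, Finset.mem_coe, true_and] at hp
    obtain ⟨x, -, y, hy, rfl⟩ := hp
    exact hT1 x hy
  have hUsep : ∀ p ∈ U, ∀ q ∈ U, p ≠ q → δ < dist p q := by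
    intro p hp q hq hpq
    simp only [hU, Finset.mem_biUnion, Finset.mem_attach, Finset.mem_image, true_and] at hp hq
    obtain ⟨x, y, hy, rfl⟩ := hp
    obtain ⟨x', y', hy', rfl⟩ := hq
    rw [Prod.dist_eq]
    by_cases hxx : (x : X) = (x' : X)
    · have hxs : x = x' := Subtype.ext hxx
      subst hxs
      have hne : y ≠ y' := by
        intro hyy; exact hpq (by rw [hyy])
      exact lt_of_lt_of_le (hT2 x y hy y' hy' hne) (le_max_right _ _)
    · exact lt_of_lt_of_le (hF.2 x x.2 x' x'.2 hxx) (le_max_left _ _)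
  have hdisj : ∀ x ∈ F.attach, ∀ y ∈ F.attach, x ≠ y →
      Disjoint ((T x).image (fun z => ((x : X), z))) ((T y).image (fun z => ((y : X), z))) := by
    intro x _ y _ hxy
    rw [Finset.disjoint_left]
    intro p hp hq
    simp only [Finset.mem_image] at hp hq
    obtain ⟨a, _, rfl⟩ := hp
    obtain ⟨b, _, hb⟩ := hq
    have : (y : X) = (x : X) := congrArg Prod.fst hb
    exact hxy (Subtype.ext this.symm)
  have hcard : F.card * n ≤ U.card := by
    rw [hU, Finset.card_biUnion hdisj]
    have : ∀ x ∈ F.attach, n ≤ ((T x).image (fun z => ((x : X), z))).card := by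
      intro x _
      rw [Finset.card_image_of_injective _ (fun a b hab => by
        simpa using congrArg Prod.snd hab)]
      exact hT3 x
    calc F.card * n = F.attach.card * n := by rw [Finset.card_attach]
    _ = ∑ _x ∈ F.attach, n := by rw [Finset.sum_const, smul_eq_mul]
    _ ≤ ∑ x ∈ F.attach, ((T x).image (fun z => ((x : X), z))).card :=
        Finset.sum_le_sum this
  calc (F.card : ℝ≥0∞) * n = ((F.card * n : ℕ) : ℝ≥0∞) := by push_cast; ring
  _ ≤ (U.card : ℝ≥0∞) := by exact_mod_cast hcard
  _ ≤ capacity δ G := card_le_capacity hUsub hUsep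

end ZAux
namespace ZAux2
open Filter MeasureTheory Set ZPaper ZAux TopologicalSpace
open scoped ENNReal NNReal Topology

variable {X : Type*} [MetricSpace X] {Y : Type*} [MetricSpace Y]

lemma exists_finite_net {δ : ℝ} {E : Set X} (h0 : 0 < δ) (h : capacity δ E ≠ ⊤) :
    ∃ F : Finset X, ↑F ⊆ E ∧ ∀ e ∈ E, ∃ x ∈ F, dist e x ≤ δ := by
  classical
  obtain ⟨m, hm⟩ := ENNReal.exists_nat_gt h
  set C : Set ℕ := {k | ∃ F : Finset X,
    (↑F ⊆ E ∧ ∀ x ∈ F, ∀ y ∈ F, x ≠ y → δ < dist x y) ∧ F.card = k} with hC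
  have hCne : C.Nonempty := ⟨0, ∅, ⟨by simp, by simp⟩, by simp⟩
  have hCbdd : BddAbove C := by
    refine ⟨m, fun k hk => ?_⟩
    obtain ⟨F, ⟨hF1, hF2⟩, rfl⟩ := hk
    have := (card_le_capacity hF1 hF2).trans_lt hm
    exact_mod_cast this.le
  set N := sSup C with hN
  have hNC : N ∈ C := Nat.sSup_mem hCne hCbdd
  obtain ⟨F, ⟨hF1, hF2⟩, hFcard⟩ := hNC
  refine ⟨F, hF1, fun e he => ?_⟩
  by_contra hcon
  push_neg at hcon
  have heF : e ∉ F := by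
    intro heF
    have := hcon e heF
    simp [dist_self] at this
    linarith
  have hmem : N + 1 ∈ C := by
    refine ⟨insert e F, ⟨?_, ?_⟩, by rw [Finset.card_insert_of_notMem heF, hFcard]⟩
    · intro x hx
      simp only [Finset.coe_insert, Set.mem_insert_iff] at hx
      rcases hx with rfl | hx
      · exact he
      · exact hF1 hx
    · intro x hx y hy hxy
      simp only [Finset.mem_insert] at hx hy
      rcases hx with rfl | hx
      · rcases hy with rfl | hy
        · exact absurd rfl hxy
        · exact hcon y hy
      · rcases hy with rfl | hy
        · rw [dist_comm]; exact hcon x hx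
        · exact hF2 x hx y hy hxy
  have := le_csSup hCbdd hmem
  omega

lemma isSeparable_of_caps {E : Set X}
    (h : ∀ n : ℕ, ∃ δ : ℝ, 0 < δ ∧ δ ≤ 1 / (n + 1) ∧ capacity δ E ≠ ⊤) :
    IsSeparable E := by
  choose δf hδ0 hδ1 hδtop using h
  have hnet : ∀ n : ℕ, ∃ F : Finset X, ↑F ⊆ E ∧ ∀ e ∈ E, ∃ x ∈ F, dist e x ≤ δf n :=
    fun n => exists_finite_net (hδ0 n) (hδtop n)
  choose F hFsub hFnet using hnet
  refine ⟨⋃ n, (↑(F n) : Set X), countable_iUnion (fun n => (F n).countable_toSet), ?_⟩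
  intro e he
  rw [Metric.mem_closure_iff]
  intro ε hε
  obtain ⟨n, hn⟩ := exists_nat_one_div_lt hε
  obtain ⟨x, hx, hdx⟩ := hFnet n e he
  refine ⟨x, mem_iUnion.2 ⟨n, hx⟩, ?_⟩
  calc dist e x ≤ δf n := hdx
  _ ≤ 1 / (n + 1) := hδ1 n
  _ < ε := hn

lemma capacity_top_of_not_isSeparable {E : Set X} (h : ¬ IsSeparable E) :
    ∃ δ₁ : ℝ, 0 < δ₁ ∧ ∀ δ, 0 < δ → δ ≤ δ₁ → capacity δ E = ⊤ := by
  by_contra hcon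
  push_neg at hcon
  apply h
  apply isSeparable_of_caps
  intro n
  obtain ⟨δ, hδ0, hδle, hδtop⟩ := hcon (1 / (n + 1)) (by positivity)
  exact ⟨δ, hδ0, hδle, hδtop⟩

/-! ### The dimension ratio -/

/-- The quantity whose `liminf`/`limsup` defines the box dimensions. -/
noncomputable def dimRatio (δ : ℝ) (E : Set X) : EReal :=
  (capacity δ E).log / ((|Real.log δ| : ℝ) : EReal)

lemma lbdim_eq (E : Set X) : lbdim E = Filter.liminf (fun δ => dimRatio δ E) (𝓝[>] (0:ℝ)) := rfl

lemma ubdim_eq (E : Set X) : ubdim E = Filter.limsup (fun δ => dimRatio δ E) (𝓝[>] (0:ℝ)) := rfl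

lemma abs_log_pos {δ : ℝ} (h0 : 0 < δ) (h1 : δ < 1) : 0 < |Real.log δ| :=
  abs_pos.2 (ne_of_lt (Real.log_neg h0 h1))

lemma abs_log_eq {δ : ℝ} (h0 : 0 < δ) (h1 : δ < 1) : |Real.log δ| = -Real.log δ :=
  abs_of_neg (Real.log_neg h0 h1)

lemma log_ofReal_rpow {δ : ℝ} (h0 : 0 < δ) (h1 : δ < 1) (c : ℝ) :
    (ENNReal.ofReal (δ ^ (-c))).log = ((c * |Real.log δ| : ℝ) : EReal) := by
  rw [ENNReal.log_ofReal_of_pos (Real.rpow_pos_of_pos h0 _), Real.log_rpow h0,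
    abs_log_eq h0 h1]
  ring_nf

lemma dimRatio_le_iff {δ c : ℝ} {E : Set X} (h0 : 0 < δ) (h1 : δ < 1) :
    dimRatio δ E ≤ (c : EReal) ↔ capacity δ E ≤ ENNReal.ofReal (δ ^ (-c)) := by
  rw [dimRatio, EReal.div_le_iff_le_mul (by exact_mod_cast abs_log_pos h0 h1)
    (by simp), ← EReal.coe_mul, mul_comm |Real.log δ| c, ← log_ofReal_rpow h0 h1 c,
    ENNReal.log_le_log_iff]

lemma le_dimRatio_iff {δ c : ℝ} {E : Set X} (h0 : 0 < δ) (h1 : δ < 1) :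
    (c : EReal) ≤ dimRatio δ E ↔ ENNReal.ofReal (δ ^ (-c)) ≤ capacity δ E := by
  rw [dimRatio, EReal.le_div_iff_mul_le (by exact_mod_cast abs_log_pos h0 h1)
    (by simp), ← EReal.coe_mul, ← log_ofReal_rpow h0 h1 c, ENNReal.log_le_log_iff]

lemma dimRatio_nonneg {δ : ℝ} {E : Set X} (h0 : 0 < δ) (h1 : δ < 1) (hE : E.Nonempty) :
    0 ≤ dimRatio δ E :=
  EReal.div_nonneg (by rw [ENNReal.zero_le_log_iff]; exact one_le_capacity hE)
    (by exact_mod_cast (abs_nonneg _))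

lemma dimRatio_top {δ : ℝ} {E : Set X} (h0 : 0 < δ) (h1 : δ < 1)
    (h : capacity δ E = ⊤) : dimRatio δ E = ⊤ := by
  rw [dimRatio, h, ENNReal.log_top]
  exact EReal.top_div_of_pos_ne_top (by exact_mod_cast abs_log_pos h0 h1) (by simp)

lemma dimRatio_empty {δ : ℝ} (h0 : 0 < δ) (h1 : δ < 1) :
    dimRatio δ (∅ : Set X) = ⊥ := by
  rw [dimRatio, capacity_empty, ENNReal.log_zero]
  exact EReal.bot_div_of_pos_ne_top (by exact_mod_cast abs_log_pos h0 h1) (by simp)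

lemma dimRatio_mono {δ : ℝ} {E E' : Set X} (h : E ⊆ E') :
    dimRatio δ E ≤ dimRatio δ E' :=
  EReal.div_le_div_right_of_nonneg (by exact_mod_cast (abs_nonneg _))
    (ENNReal.log_monotone (capacity_mono h))

/-! ### Filter helpers -/

lemma eventually_small {δ₀ : ℝ} (h : 0 < δ₀) : ∀ᶠ δ in 𝓝[>](0:ℝ), 0 < δ ∧ δ < δ₀ := by
  have h1 : ∀ᶠ δ in 𝓝[>](0:ℝ), 0 < δ := eventually_mem_nhdsWithin
  have h2 : ∀ᶠ δ in 𝓝[>](0:ℝ), δ < δ₀ := (eventually_lt_nhds h).filter_mono nhdsWithin_le_nhds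
  exact h1.and h2

lemma tendsto_mul_pos {c : ℝ} (hc : 0 < c) :
    Filter.Tendsto (fun δ:ℝ => c * δ) (𝓝[>](0:ℝ)) (𝓝[>](0:ℝ)) := by
  apply tendsto_nhdsWithin_of_tendsto_nhds_of_eventually_within
  · have : Filter.Tendsto (fun δ:ℝ => c * δ) (𝓝 (0:ℝ)) (𝓝 (0:ℝ)) := by
      simpa using (continuous_mul_left c).tendsto (0:ℝ)
    exact this.mono_left nhdsWithin_le_nhds
  · filter_upwards [self_mem_nhdsWithin] with x hx
    exact mul_pos hc hx

end ZAux2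
namespace ZAux3
open Filter MeasureTheory Set ZPaper ZAux ZAux2 TopologicalSpace
open scoped ENNReal NNReal Topology

variable {X : Type*} [MetricSpace X] {Y : Type*} [MetricSpace Y]

lemma lbdim_mono {E E' : Set X} (h : E ⊆ E') : lbdim E ≤ lbdim E' := by
  rw [lbdim_eq, lbdim_eq]
  exact liminf_le_liminf (Eventually.of_forall fun δ => dimRatio_mono h)

lemma ubdim_mono {E E' : Set X} (h : E ⊆ E') : ubdim E ≤ ubdim E' := by
  rw [ubdim_eq, ubdim_eq]
  exact limsup_le_limsup (Eventually.of_forall fun δ => dimRatio_mono h)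

lemma lbdim_le_ubdim (E : Set X) : lbdim E ≤ ubdim E := by
  rw [lbdim_eq, ubdim_eq]
  exact liminf_le_limsup

lemma lbdim_nonneg {E : Set X} (h : E.Nonempty) : 0 ≤ lbdim E := by
  rw [lbdim_eq]
  refine le_liminf_of_le (by isBoundedDefault) ?_
  filter_upwards [eventually_small one_pos] with δ hδ
  exact dimRatio_nonneg hδ.1 hδ.2 h

lemma ubdim_nonneg {E : Set X} (h : E.Nonempty) : 0 ≤ ubdim E :=
  le_trans (lbdim_nonneg h) (lbdim_le_ubdim E)

lemma lbdim_empty : lbdim (∅ : Set X) = ⊥ := by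
  rw [lbdim_eq]
  refine le_bot_iff.1 (liminf_le_of_frequently_le ?_)
  refine Eventually.frequently ?_
  filter_upwards [eventually_small one_pos] with δ hδ
  exact le_of_eq (dimRatio_empty hδ.1 hδ.2)

lemma ubdim_empty : ubdim (∅ : Set X) = ⊥ := by
  rw [ubdim_eq]
  refine le_bot_iff.1 (limsup_le_of_le (by isBoundedDefault) ?_)
  filter_upwards [eventually_small one_pos] with δ hδ
  exact le_of_eq (dimRatio_empty hδ.1 hδ.2)

lemma lbdim_top_of_not_isSeparable {E : Set X} (h : ¬ IsSeparable E) : lbdim E = ⊤ := by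
  obtain ⟨δ₁, hδ₁, htop⟩ := capacity_top_of_not_isSeparable h
  rw [lbdim_eq]
  refine top_le_iff.1 (le_liminf_of_le (by isBoundedDefault) ?_)
  filter_upwards [eventually_small (lt_min hδ₁ one_pos)] with δ hδ
  have h1 : δ < 1 := hδ.2.trans_le (min_le_right _ _)
  have h2 : δ ≤ δ₁ := (hδ.2.trans_le (min_le_left _ _)).le
  rw [dimRatio_top hδ.1 h1 (htop δ hδ.1 h2)]

lemma ubdim_top_of_not_isSeparable {E : Set X} (h : ¬ IsSeparable E) : ubdim E = ⊤ :=
  top_le_iff.1 ((lbdim_top_of_not_isSeparable h) ▸ lbdim_le_ubdim E)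

/-! ### Closure lemmas -/

lemma ubdim_closure_le (E : Set X) : ubdim (closure E) ≤ ubdim E := by
  rcases E.eq_empty_or_nonempty with rfl | hne
  · rw [closure_empty]
  refine EReal.le_of_forall_lt_iff_le.1 fun s hs => ?_
  obtain ⟨s', hs'1, hs'2⟩ := EReal.exists_between_coe_real hs
  have hs'0 : (0:ℝ) < s' := by
    have := (ubdim_nonneg hne).trans_lt hs'1
    exact_mod_cast this
  have hss : s' < s := by exact_mod_cast hs'2
  have hev1 : ∀ᶠ δ in 𝓝[>](0:ℝ), capacity δ E ≤ ENNReal.ofReal (δ ^ (-s')) := by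
    filter_upwards [eventually_lt_of_limsup_lt hs'1, eventually_small one_pos] with δ hr hδ
    exact (dimRatio_le_iff hδ.1 hδ.2).1 hr.le
  have hev2 : ∀ᶠ δ in 𝓝[>](0:ℝ), capacity (δ/2) E ≤ ENNReal.ofReal ((δ/2) ^ (-s')) := by
    have ht : Filter.Tendsto (fun δ:ℝ => δ/2) (𝓝[>](0:ℝ)) (𝓝[>](0:ℝ)) := by
      have := tendsto_mul_pos (c := (1:ℝ)/2) (by norm_num)
      simpa [div_eq_inv_mul, one_div] using this
    exact ht.eventually hev1
  set δ₀ : ℝ := min (1/2) (Real.exp (-(s' * Real.log 2) / (s - s'))) with hδ₀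
  have hδ₀pos : 0 < δ₀ := lt_min (by norm_num) (Real.exp_pos _)
  refine limsup_le_of_le (by isBoundedDefault) ?_
  filter_upwards [hev2, eventually_small hδ₀pos] with δ hcap hδ
  obtain ⟨h0, hlt⟩ := hδ
  have h1 : δ < 1 := by
    have := hlt.trans_le (min_le_left _ _)
    linarith
  have h2 : capacity δ (closure E) ≤ ENNReal.ofReal ((δ/2) ^ (-s')) :=
    (capacity_closure_le (half_pos h0) (half_lt_self h0)).trans hcap
  refine (dimRatio_le_iff h0 h1).2 (h2.trans (ENNReal.ofReal_le_ofReal ?_))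
  -- (δ/2) ^ (-s') ≤ δ ^ (-s)
  have hp1 : (0:ℝ) < (δ/2) ^ (-s') := Real.rpow_pos_of_pos (half_pos h0) _
  have hp2 : (0:ℝ) < δ ^ (-s) := Real.rpow_pos_of_pos h0 _
  rw [← Real.log_le_log_iff hp1 hp2, Real.log_rpow (half_pos h0), Real.log_rpow h0,
    Real.log_div (ne_of_gt h0) (by norm_num)]
  have hlog : Real.log δ ≤ -(s' * Real.log 2) / (s - s') := by
    have := hlt.trans_le (min_le_right _ _)
    have := Real.log_lt_log h0 this
    rw [Real.log_exp] at this
    exact this.le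
  have hL : 0 < -Real.log δ := by
    have := Real.log_neg h0 h1; linarith
  have hss' : (0:ℝ) < s - s' := by linarith
  have hcore : s' * Real.log 2 ≤ (s - s') * (-Real.log δ) := by
    have h' := mul_le_mul_of_nonneg_left hlog hss'.le
    have heq : (s - s') * (-(s' * Real.log 2) / (s - s')) = -(s' * Real.log 2) := by
      field_simp
    rw [heq] at h'
    nlinarith [h']
  nlinarith [hcore]

lemma lbdim_closure_le (E : Set X) : lbdim (closure E) ≤ lbdim E := by
  rcases E.eq_empty_or_nonempty with rfl | hne
  · rw [closure_empty]
  refine EReal.le_of_forall_lt_iff_le.1 fun s hs => ?_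
  obtain ⟨s', hs'1, hs'2⟩ := EReal.exists_between_coe_real hs
  have hs'0 : (0:ℝ) < s' := by
    have := (lbdim_nonneg hne).trans_lt hs'1
    exact_mod_cast this
  have hss : s' < s := by exact_mod_cast hs'2
  have hss' : (0:ℝ) < s - s' := by linarith
  rw [lbdim_eq] at hs'1 ⊢
  have hfreq : ∃ᶠ δ in 𝓝[>](0:ℝ), dimRatio δ E < (s' : EReal) :=
    frequently_lt_of_liminf_lt (by isBoundedDefault) hs'1
  set δ₀ : ℝ := min (1/4) (Real.exp (-(s * Real.log 2) / (s - s'))) with hδ₀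
  have hδ₀pos : 0 < δ₀ := lt_min (by norm_num) (Real.exp_pos _)
  have hfreq2 : ∃ᶠ δ in 𝓝[>](0:ℝ), dimRatio (2*δ) (closure E) ≤ (s : EReal) := by
    refine (hfreq.and_eventually (eventually_small hδ₀pos)).mono ?_
    rintro δ ⟨hr, h0, hlt⟩
    have hlt4 : δ < 1/4 := hlt.trans_le (min_le_left _ _)
    have h1 : δ < 1 := by linarith
    have hcap : capacity δ E ≤ ENNReal.ofReal (δ ^ (-s')) := (dimRatio_le_iff h0 h1).1 hr.le
    have h20 : 0 < 2*δ := by linarith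
    have h21 : 2*δ < 1 := by linarith
    refine (dimRatio_le_iff h20 h21).2 ?_
    refine (capacity_closure_le h0 (by linarith)).trans (hcap.trans (ENNReal.ofReal_le_ofReal ?_))
    have hp1 : (0:ℝ) < δ ^ (-s') := Real.rpow_pos_of_pos h0 _
    have hp2 : (0:ℝ) < (2*δ) ^ (-s) := Real.rpow_pos_of_pos h20 _
    rw [← Real.log_le_log_iff hp1 hp2, Real.log_rpow h0, Real.log_rpow h20,
      Real.log_mul (by norm_num) (ne_of_gt h0)]
    have hlog : Real.log δ ≤ -(s * Real.log 2) / (s - s') := by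
      have hle := hlt.trans_le (min_le_right _ _)
      have := Real.log_lt_log h0 hle
      rw [Real.log_exp] at this
      exact this.le
    have h' := mul_le_mul_of_nonneg_left hlog hss'.le
    have heq : (s - s') * (-(s * Real.log 2) / (s - s')) = -(s * Real.log 2) := by
      field_simp
    rw [heq] at h'
    nlinarith [h']
  have hmap : Filter.Tendsto (fun δ:ℝ => 2*δ) (𝓝[>](0:ℝ)) (𝓝[>](0:ℝ)) :=
    tendsto_mul_pos two_pos
  exact liminf_le_of_frequently_le (hmap.frequently hfreq2)

end ZAux3
namespace ZAux4
open Filter MeasureTheory Set ZPaper ZAux ZAux2 ZAux3 TopologicalSpace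
open scoped ENNReal NNReal Topology

variable {X : Type*} [MetricSpace X] {Y : Type*} [MetricSpace Y]

lemma updim_le_of_cover {E : Set X} {A : ℕ → Set X} (h : E ⊆ ⋃ n, A n) :
    updim E ≤ ⨆ n, ubdim (A n) :=
  iInf_le_of_le A (iInf_le_of_le h le_rfl)

lemma lpdim_le_of_cover {E : Set X} {A : ℕ → Set X} (h : E ⊆ ⋃ n, A n) :
    lpdim E ≤ ⨆ n, lbdim (A n) :=
  iInf_le_of_le A (iInf_le_of_le h le_rfl)

lemma updim_mono {E E' : Set X} (h : E ⊆ E') : updim E ≤ updim E' :=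
  le_iInf fun A => le_iInf fun hA => updim_le_of_cover (h.trans hA)

lemma lpdim_mono {E E' : Set X} (h : E ⊆ E') : lpdim E ≤ lpdim E' :=
  le_iInf fun A => le_iInf fun hA => lpdim_le_of_cover (h.trans hA)

lemma updim_le_ubdim (E : Set X) : updim E ≤ ubdim E := by
  have := updim_le_of_cover (E := E) (A := fun _ => E)
    (fun x hx => mem_iUnion.2 ⟨0, hx⟩)
  simpa using this

lemma lpdim_le_lbdim (E : Set X) : lpdim E ≤ lbdim E := by
  have := lpdim_le_of_cover (E := E) (A := fun _ => E)
    (fun x hx => mem_iUnion.2 ⟨0, hx⟩)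
  simpa using this

lemma updim_top_of_not_isSeparable {E : Set X} (h : ¬ IsSeparable E) : updim E = ⊤ := by
  refine top_le_iff.1 (le_iInf fun A => le_iInf fun hA => ?_)
  have : ∃ n, ¬ IsSeparable (A n ∩ E) := by
    by_contra hcon
    push_neg at hcon
    apply h
    have hE : E = ⋃ n, A n ∩ E := by
      ext x
      simp only [mem_iUnion, mem_inter_iff]
      exact ⟨fun hx => (mem_iUnion.1 (hA hx)).imp (fun n hn => ⟨hn, hx⟩),
        fun ⟨n, _, hx⟩ => hx⟩
    rw [hE]
    exact IsSeparable.iUnion hcon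
  obtain ⟨n, hn⟩ := this
  have : ¬ IsSeparable (A n) := fun hsep => hn (hsep.mono inter_subset_left)
  refine le_trans ?_ (le_iSup _ n)
  rw [ubdim_top_of_not_isSeparable this]

lemma lpdim_top_of_not_isSeparable {E : Set X} (h : ¬ IsSeparable E) : lpdim E = ⊤ := by
  refine top_le_iff.1 (le_iInf fun A => le_iInf fun hA => ?_)
  have : ∃ n, ¬ IsSeparable (A n ∩ E) := by
    by_contra hcon
    push_neg at hcon
    apply h
    have hE : E = ⋃ n, A n ∩ E := by
      ext x
      simp only [mem_iUnion, mem_inter_iff]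
      exact ⟨fun hx => (mem_iUnion.1 (hA hx)).imp (fun n hn => ⟨hn, hx⟩),
        fun ⟨n, _, hx⟩ => hx⟩
    rw [hE]
    exact IsSeparable.iUnion hcon
  obtain ⟨n, hn⟩ := this
  have : ¬ IsSeparable (A n) := fun hsep => hn (hsep.mono inter_subset_left)
  refine le_trans ?_ (le_iSup _ n)
  rw [lbdim_top_of_not_isSeparable this]

/-! ### Dimension of measures vs outer measure -/

lemma updimM_le_of_ne_zero {Z : Type*} [MetricSpace Z] [MeasurableSpace Z] [BorelSpace Z]
    (τ : Measure Z) {S : Set Z} (h : τ S ≠ 0) : updimM τ ≤ updim S := by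
  refine le_iInf fun A => le_iInf fun hA => ?_
  set H := toMeasurable τ S with hH
  have hsub : S ⊆ ⋃ k, closure (A k) ∩ H := by
    intro x hx
    obtain ⟨k, hk⟩ := mem_iUnion.1 (hA hx)
    exact mem_iUnion.2 ⟨k, subset_closure hk, subset_toMeasurable τ S hx⟩
  have hUn : τ (⋃ k, closure (A k) ∩ H) ≠ 0 := by
    intro h0
    exact h (measure_mono_null hsub h0)
  have hex : ∃ k, τ (closure (A k) ∩ H) ≠ 0 := by
    by_contra hcon
    push_neg at hcon
    exact hUn (measure_iUnion_null hcon)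
  obtain ⟨k, hk⟩ := hex
  have hmeas : MeasurableSet[borel Z] (closure (A k) ∩ H) := by
    rw [← BorelSpace.measurable_eq]
    exact isClosed_closure.measurableSet.inter (measurableSet_toMeasurable τ S)
  calc updimM τ ≤ updim (closure (A k) ∩ H) :=
        iInf_le_of_le _ (iInf_le_of_le ⟨hmeas, pos_iff_ne_zero.2 hk⟩ le_rfl)
  _ ≤ updim (closure (A k)) := updim_mono inter_subset_left
  _ ≤ ubdim (closure (A k)) := updim_le_ubdim _
  _ ≤ ubdim (A k) := ubdim_closure_le _
  _ ≤ ⨆ n, ubdim (A n) := le_iSup (fun n => ubdim (A n)) k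

lemma lpdimM_le_of_ne_zero {Z : Type*} [MetricSpace Z] [MeasurableSpace Z] [BorelSpace Z]
    (τ : Measure Z) {S : Set Z} (h : τ S ≠ 0) : lpdimM τ ≤ lpdim S := by
  refine le_iInf fun A => le_iInf fun hA => ?_
  set H := toMeasurable τ S with hH
  have hsub : S ⊆ ⋃ k, closure (A k) ∩ H := by
    intro x hx
    obtain ⟨k, hk⟩ := mem_iUnion.1 (hA hx)
    exact mem_iUnion.2 ⟨k, subset_closure hk, subset_toMeasurable τ S hx⟩
  have hUn : τ (⋃ k, closure (A k) ∩ H) ≠ 0 := by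
    intro h0
    exact h (measure_mono_null hsub h0)
  have hex : ∃ k, τ (closure (A k) ∩ H) ≠ 0 := by
    by_contra hcon
    push_neg at hcon
    exact hUn (measure_iUnion_null hcon)
  obtain ⟨k, hk⟩ := hex
  have hmeas : MeasurableSet[borel Z] (closure (A k) ∩ H) := by
    rw [← BorelSpace.measurable_eq]
    exact isClosed_closure.measurableSet.inter (measurableSet_toMeasurable τ S)
  calc lpdimM τ ≤ lpdim (closure (A k) ∩ H) :=
        iInf_le_of_le _ (iInf_le_of_le ⟨hmeas, pos_iff_ne_zero.2 hk⟩ le_rfl)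
  _ ≤ lpdim (closure (A k)) := lpdim_mono inter_subset_left
  _ ≤ lbdim (closure (A k)) := lpdim_le_lbdim _
  _ ≤ lbdim (A k) := lbdim_closure_le _
  _ ≤ ⨆ n, lbdim (A n) := le_iSup (fun n => lbdim (A n)) k

/-! ### An `EReal` helper -/

lemma add_le_of_forall_real_lt {a b c : EReal}
    (h : ∀ t : ℝ, (t : EReal) < b → a + (t : EReal) ≤ c) : a + b ≤ c := by
  rcases eq_bot_or_bot_lt b with rfl | hb
  · rw [EReal.add_bot]; exact bot_le
  rcases eq_bot_or_bot_lt a with rfl | ha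
  · rw [EReal.bot_add]; exact bot_le
  refine EReal.add_le_of_forall_lt fun a' ha' b' hb' => ?_
  obtain ⟨t, ht1, ht2⟩ := EReal.exists_between_coe_real hb'
  calc a' + b' ≤ a + (t : EReal) := add_le_add ha'.le ht1.le
  _ ≤ c := h t ht2

end ZAux4
namespace ZAux5
open Filter MeasureTheory Set ZPaper ZAux ZAux2 ZAux3 ZAux4 TopologicalSpace
open scoped ENNReal NNReal Topology

variable {X : Type*} [MetricSpace X] {Y : Type*} [MetricSpace Y]

lemma key_core {G : Set (X × Y)} {T : Set X} {t u v η : ℝ} (hη1 : η ≤ 1)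
    (hk : ∀ x ∈ T, ∀ δ : ℝ, 0 < δ → δ < η → ENNReal.ofReal (δ ^ (-t)) ≤ capacity δ (sect G x))
    (hvt : v < t) {δ : ℝ} (h0 : 0 < δ) (hδη : δ < η)
    (hδ2 : δ ≤ Real.exp (Real.log 2 / (v - t)))
    (hcapT : ENNReal.ofReal (δ ^ (-u)) ≤ capacity δ T) :
    ((u + v : ℝ) : EReal) ≤ dimRatio δ G := by
  have hδ1 : δ < 1 := lt_of_lt_of_le hδη hη1
  set n : ℕ := max 1 (Nat.floor (δ ^ (-t))) with hn
  have hrpos : (0:ℝ) < δ ^ (-t) := Real.rpow_pos_of_pos h0 _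
  have hnle : ∀ x ∈ T, (n : ℝ≥0∞) ≤ capacity δ (sect G x) := by
    intro x hx
    have hc := hk x hx δ h0 hδη
    have hne : (sect G x).Nonempty := by
      apply nonempty_of_capacity_ne_zero
      intro hzero
      rw [hzero] at hc
      exact absurd (le_antisymm hc zero_le) (by
        simp only [ENNReal.ofReal_eq_zero, not_le]
        exact hrpos)
    have h1c : 1 ≤ capacity δ (sect G x) := one_le_capacity hne
    have hfl : ((Nat.floor (δ ^ (-t)) : ℕ) : ℝ≥0∞) ≤ capacity δ (sect G x) := by
      refine le_trans ?_ hc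
      rw [← ENNReal.ofReal_natCast]
      exact ENNReal.ofReal_le_ofReal (Nat.floor_le hrpos.le)
    rw [hn]
    rcases le_total 1 (Nat.floor (δ ^ (-t))) with hmax | hmax
    · rw [sup_eq_right.2 hmax]; exact hfl
    · rw [sup_eq_left.2 hmax]; simpa using h1c
  have hprod : capacity δ T * (n : ℝ≥0∞) ≤ capacity δ G := capacity_prod_sect hnle
  have hn2 : ENNReal.ofReal (δ ^ (-t) / 2) ≤ (n : ℝ≥0∞) := by
    rw [← ENNReal.ofReal_natCast]
    refine ENNReal.ofReal_le_ofReal ?_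
    rcases lt_or_ge (δ ^ (-t)) 2 with hlt | hge
    · have h1n : (1:ℝ) ≤ (n:ℝ) := by
        rw [hn]; exact_mod_cast le_max_left 1 _
      linarith
    · have := Nat.sub_one_lt_floor (δ ^ (-t))
      have h2 : ((Nat.floor (δ ^ (-t)) : ℕ) : ℝ) ≤ (n : ℝ) := by
        rw [hn]; exact_mod_cast le_max_right 1 _
      linarith
  have hpow : ENNReal.ofReal (δ ^ (-(u + v))) ≤ capacity δ G := by
    have hstep : ENNReal.ofReal (δ ^ (-u)) * ENNReal.ofReal (δ ^ (-t) / 2) ≤ capacity δ G :=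
      le_trans (mul_le_mul' hcapT hn2) hprod
    rw [← ENNReal.ofReal_mul (Real.rpow_pos_of_pos h0 (-u)).le] at hstep
    refine le_trans (ENNReal.ofReal_le_ofReal ?_) hstep
    -- δ ^ (-(u+v)) ≤ δ ^ (-u) * (δ ^ (-t) / 2)
    have h2le : (2:ℝ) ≤ δ ^ (v - t) := by
      rw [Real.rpow_def_of_pos h0]
      rw [show (2:ℝ) = Real.exp (Real.log 2) from (Real.exp_log two_pos).symm]
      apply Real.exp_le_exp.2
      have hvtneg : v - t < 0 := by linarith
      have hlog : Real.log δ ≤ Real.log 2 / (v - t) := by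
        calc Real.log δ ≤ Real.log (Real.exp (Real.log 2 / (v - t))) :=
              Real.log_le_log h0 hδ2
        _ = Real.log 2 / (v - t) := Real.log_exp _
      have := mul_le_mul_of_nonpos_right hlog hvtneg.le
      calc Real.log 2 = (Real.log 2 / (v - t)) * (v - t) := by
            rw [div_mul_cancel₀ _ (by linarith : v - t ≠ 0)]
      _ ≤ Real.log δ * (v - t) := this
    have key : δ ^ (-(u + v)) * 2 ≤ δ ^ (-(u + v)) * δ ^ (v - t) :=
      mul_le_mul_of_nonneg_left h2le (Real.rpow_pos_of_pos h0 _).le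
    rw [← Real.rpow_add h0] at key
    have heq : -(u + v) + (v - t) = -u + -t := by ring
    rw [heq, Real.rpow_add h0] at key
    linarith
  exact (le_dimRatio_iff h0 hδ1).2 hpow

lemma key_perk_ub {G : Set (X × Y)} {T : Set X} {t η : ℝ} (hη : 0 < η) (hη1 : η ≤ 1)
    (hk : ∀ x ∈ T, ∀ δ : ℝ, 0 < δ → δ < η → ENNReal.ofReal (δ ^ (-t)) ≤ capacity δ (sect G x)) :
    ubdim T + (t : EReal) ≤ ubdim G := by
  rcases T.eq_empty_or_nonempty with rfl | hne
  · rw [ubdim_empty, EReal.bot_add]; exact bot_le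
  refine EReal.add_le_of_forall_lt fun a' ha' b' hb' => ?_
  obtain ⟨u, hu1, hu2⟩ := EReal.exists_between_coe_real ha'
  obtain ⟨v, hv1, hv2⟩ := EReal.exists_between_coe_real hb'
  have hvt : v < t := by exact_mod_cast hv2
  have hsuff : ((u + v : ℝ) : EReal) ≤ ubdim G := by
    rw [ubdim_eq] at hu2 ⊢
    have hfreq : ∃ᶠ δ in 𝓝[>](0:ℝ), (u : EReal) < dimRatio δ T :=
      frequently_lt_of_lt_limsup (by isBoundedDefault) hu2
    set δ₀ : ℝ := min η (Real.exp (Real.log 2 / (v - t))) with hδ₀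
    have hδ₀pos : 0 < δ₀ := lt_min hη (Real.exp_pos _)
    refine le_limsup_of_frequently_le' ?_
    refine ((hfreq.and_eventually (eventually_small hδ₀pos)).mono ?_)
    rintro δ ⟨hu', h0, hlt⟩
    have hδη : δ < η := hlt.trans_le (min_le_left _ _)
    have hδ2 : δ ≤ Real.exp (Real.log 2 / (v - t)) := (hlt.trans_le (min_le_right _ _)).le
    have hcapT : ENNReal.ofReal (δ ^ (-u)) ≤ capacity δ T :=
      (le_dimRatio_iff h0 (hδη.trans_le hη1)).1 hu'.le
    exact key_core hη1 hk hvt h0 hδη hδ2 hcapT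
  calc a' + b' ≤ ((u:EReal) + (v:EReal)) := add_le_add hu1.le hv1.le
  _ = ((u + v : ℝ) : EReal) := by rw [EReal.coe_add]
  _ ≤ ubdim G := hsuff

lemma key_perk_lb {G : Set (X × Y)} {T : Set X} {t η : ℝ} (hη : 0 < η) (hη1 : η ≤ 1)
    (hk : ∀ x ∈ T, ∀ δ : ℝ, 0 < δ → δ < η → ENNReal.ofReal (δ ^ (-t)) ≤ capacity δ (sect G x)) :
    lbdim T + (t : EReal) ≤ lbdim G := by
  rcases T.eq_empty_or_nonempty with rfl | hne
  · rw [lbdim_empty, EReal.bot_add]; exact bot_le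
  refine EReal.add_le_of_forall_lt fun a' ha' b' hb' => ?_
  obtain ⟨u, hu1, hu2⟩ := EReal.exists_between_coe_real ha'
  obtain ⟨v, hv1, hv2⟩ := EReal.exists_between_coe_real hb'
  have hvt : v < t := by exact_mod_cast hv2
  have hsuff : ((u + v : ℝ) : EReal) ≤ lbdim G := by
    rw [lbdim_eq] at hu2 ⊢
    have hev : ∀ᶠ δ in 𝓝[>](0:ℝ), (u : EReal) < dimRatio δ T :=
      eventually_lt_of_lt_liminf hu2
    set δ₀ : ℝ := min η (Real.exp (Real.log 2 / (v - t))) with hδ₀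
    have hδ₀pos : 0 < δ₀ := lt_min hη (Real.exp_pos _)
    refine le_liminf_of_le (by isBoundedDefault) ?_
    refine ((hev.and (eventually_small hδ₀pos)).mono ?_)
    rintro δ ⟨hu', h0, hlt⟩
    have hδη : δ < η := hlt.trans_le (min_le_left _ _)
    have hδ2 : δ ≤ Real.exp (Real.log 2 / (v - t)) := (hlt.trans_le (min_le_right _ _)).le
    have hcapT : ENNReal.ofReal (δ ^ (-u)) ≤ capacity δ T :=
      (le_dimRatio_iff h0 (hδη.trans_le hη1)).1 hu'.le
    exact key_core hη1 hk hvt h0 hδη hδ2 hcapT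
  calc a' + b' ≤ ((u:EReal) + (v:EReal)) := add_le_add hu1.le hv1.le
  _ = ((u + v : ℝ) : EReal) := by rw [EReal.coe_add]
  _ ≤ lbdim G := hsuff

/-- The decomposition of `S` into the sets where the section capacity estimate is
uniform up to scale `1/(k+1)`. -/
def goodSet (G : Set (X × Y)) (S : Set X) (t : ℝ) (k : ℕ) : Set X :=
  {x ∈ S | ∀ δ : ℝ, 0 < δ → δ < 1/(k+1:ℝ) → ENNReal.ofReal (δ ^ (-t)) ≤ capacity δ (sect G x)}

lemma goodSet_cover {G : Set (X × Y)} {S : Set X} {t : ℝ}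
    (h : ∀ x ∈ S, (t : EReal) < lbdim (sect G x)) :
    S ⊆ ⋃ k, goodSet G S t k := by
  intro x hx
  have hev : ∀ᶠ δ in 𝓝[>](0:ℝ),
      ENNReal.ofReal (δ ^ (-t)) ≤ capacity δ (sect G x) := by
    have h1 : ∀ᶠ δ in 𝓝[>](0:ℝ), (t : EReal) < dimRatio δ (sect G x) := by
      have := h x hx
      rw [lbdim_eq] at this
      exact eventually_lt_of_lt_liminf this
    filter_upwards [h1, eventually_small one_pos] with δ hδ1 hδ2
    exact (le_dimRatio_iff hδ2.1 hδ2.2).1 hδ1.le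
  rw [Filter.Eventually, mem_nhdsGT_iff_exists_Ioc_subset] at hev
  obtain ⟨ε, hε, hsub⟩ := hev
  simp only [mem_Ioi] at hε
  obtain ⟨k, hk⟩ := exists_nat_one_div_lt hε
  refine mem_iUnion.2 ⟨k, hx, fun δ h0 hδ => ?_⟩
  exact hsub ⟨h0, le_of_lt (lt_of_lt_of_le (hδ.trans hk) le_rfl)⟩

lemma key_ub {G : Set (X × Y)} {S : Set X} {t : ℝ}
    (h : ∀ x ∈ S, (t : EReal) < lbdim (sect G x)) :
    updim S + (t : EReal) ≤ ubdim G := by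
  have hcov := goodSet_cover h
  have h1 : updim S ≤ ⨆ k, ubdim (goodSet G S t k) := updim_le_of_cover hcov
  refine le_trans (add_le_add_left h1 _) ?_
  refine EReal.add_le_of_forall_lt fun a' ha' b' hb' => ?_
  obtain ⟨k, hk⟩ := lt_iSup_iff.1 ha'
  have hperk : ubdim (goodSet G S t k) + (t : EReal) ≤ ubdim G := by
    refine key_perk_ub (η := 1/(k+1:ℝ)) (by positivity) ?_ ?_
    · rw [div_le_one (by positivity)]
      linarith [Nat.cast_nonneg (α := ℝ) k]
    · exact fun x hx δ h0 hδ => hx.2 δ h0 hδ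
  calc a' + b' ≤ ubdim (goodSet G S t k) + (t : EReal) := add_le_add hk.le hb'.le
  _ ≤ ubdim G := hperk

lemma key_lb {G : Set (X × Y)} {S : Set X} {t : ℝ}
    (h : ∀ x ∈ S, (t : EReal) < lbdim (sect G x)) :
    lpdim S + (t : EReal) ≤ lbdim G := by
  have hcov := goodSet_cover h
  have h1 : lpdim S ≤ ⨆ k, lbdim (goodSet G S t k) := lpdim_le_of_cover hcov
  refine le_trans (add_le_add_left h1 _) ?_
  refine EReal.add_le_of_forall_lt fun a' ha' b' hb' => ?_
  obtain ⟨k, hk⟩ := lt_iSup_iff.1 ha'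
  have hperk : lbdim (goodSet G S t k) + (t : EReal) ≤ lbdim G := by
    refine key_perk_lb (η := 1/(k+1:ℝ)) (by positivity) ?_ ?_
    · rw [div_le_one (by positivity)]
      linarith [Nat.cast_nonneg (α := ℝ) k]
    · exact fun x hx δ h0 hδ => hx.2 δ h0 hδ
  calc a' + b' ≤ lbdim (goodSet G S t k) + (t : EReal) := add_le_add hk.le hb'.le
  _ ≤ lbdim G := hperk

end ZAux5
namespace ZAux6
open Filter MeasureTheory Set ZPaper ZAux ZAux2 ZAux3 ZAux4 ZAux5 TopologicalSpace
open scoped ENNReal NNReal Topology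

variable {X : Type*} [MetricSpace X] {Y : Type*} [MetricSpace Y]

lemma borel_prod_snd {S : Set Y} (hS : MeasurableSet[borel Y] S) :
    MeasurableSet[borel (X × Y)] (Set.univ ×ˢ S) := by
  letI : MeasurableSpace Y := borel Y
  haveI : BorelSpace Y := ⟨rfl⟩
  letI : MeasurableSpace (X × Y) := borel (X × Y)
  haveI : BorelSpace (X × Y) := ⟨rfl⟩
  have h : Measurable (Prod.snd : X × Y → Y) := continuous_snd.measurable
  have heq : (Prod.snd : X × Y → Y) ⁻¹' S = Set.univ ×ˢ S := by
    ext ⟨a, b⟩; simp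
  rw [← heq]
  exact h hS

section Trace

variable [MeasurableSpace X] [BorelSpace X] [MeasurableSpace Y] [BorelSpace Y]

lemma measurableSet_of_separable_snd {S : Set Y} (hS : IsSeparable S) {E : Set (X × Y)}
    (hE : MeasurableSet[borel (X × Y)] E) (hsub : E ⊆ Set.univ ×ˢ S) :
    MeasurableSet E := by
  obtain ⟨D, hDc, hSD⟩ := hS
  set C := closure D with hC
  set T : Set (X × Y) := Set.univ ×ˢ C with hTdef
  have hCmeas : MeasurableSet C := isClosed_closure.measurableSet
  have hTmeas : MeasurableSet T := MeasurableSet.univ.prod hCmeas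
  have key : ∀ U : Set (X × Y), IsOpen U → MeasurableSet (U ∩ T) := by
    intro U hU
    have hdecomp : U ∩ T = ⋃ (d ∈ D) (q : ℚ),
        (({x | ∃ r > 0, Metric.ball x r ×ˢ Metric.ball d (q : ℝ) ⊆ U} ×ˢ
          Metric.ball d (q : ℝ)) ∩ T) := by
      ext ⟨x, y⟩
      constructor
      · rintro ⟨hxyU, -, hyC⟩
        obtain ⟨r, hr, hball⟩ := Metric.isOpen_iff.1 hU _ hxyU
        rw [← ball_prod_same] at hball
        obtain ⟨d, hd, hyd⟩ := Metric.mem_closure_iff.1 hyC (r / 4) (by linarith)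
        obtain ⟨q, hq1, hq2⟩ := exists_rat_btwn (show r / 4 < r / 2 by linarith)
        refine mem_iUnion.2 ⟨d, mem_iUnion.2 ⟨hd, mem_iUnion.2 ⟨q, ⟨⟨⟨r, hr, ?_⟩, ?_⟩,
          ⟨trivial, hyC⟩⟩⟩⟩⟩
        · refine subset_trans (prod_mono_right ?_) hball
          intro z hz
          simp only [Metric.mem_ball] at hz ⊢
          have : dist z y ≤ dist z d + dist d y := dist_triangle _ _ _
          rw [dist_comm d y] at this
          linarith
        · simp only [Metric.mem_ball]
          linarith
      · intro hmem
        obtain ⟨d, hrest⟩ := mem_iUnion.1 hmem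
        obtain ⟨hd, hrest⟩ := mem_iUnion.1 hrest
        obtain ⟨q, ⟨⟨⟨r, hr, hsubU⟩, hyq⟩, hT⟩⟩ := mem_iUnion.1 hrest
        exact ⟨hsubU ⟨Metric.mem_ball_self hr, hyq⟩, hT⟩
    rw [hdecomp]
    refine MeasurableSet.biUnion hDc fun d _ => MeasurableSet.iUnion fun q => ?_
    have hWopen : IsOpen {x : X | ∃ r > 0, Metric.ball x r ×ˢ Metric.ball d (q : ℝ) ⊆ U} := by
      rw [Metric.isOpen_iff]
      rintro x ⟨r, hr, hsubU⟩
      refine ⟨r / 2, half_pos hr, fun x' hx' => ⟨r / 2, half_pos hr, ?_⟩⟩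
      refine subset_trans (prod_mono_left ?_) hsubU
      intro z hz
      simp only [Metric.mem_ball] at hz hx' ⊢
      have : dist z x ≤ dist z x' + dist x' x := dist_triangle _ _ _
      linarith
    exact (hWopen.measurableSet.prod Metric.isOpen_ball.measurableSet).inter hTmeas
  have hET : E ∩ T = E := inter_eq_self_of_subset_left
    (hsub.trans (prod_mono_right (hSD.trans (le_refl _))))
  have hEm : MeasurableSet (E ∩ T) := by
    refine MeasurableSpace.generateFrom_induction (C := {s : Set (X × Y) | IsOpen s})
      (p := fun A _ => MeasurableSet (A ∩ T))
      (fun t ht _ => key t ht) (by simp) (fun A _ hA => ?_) (fun f _ hf => ?_) E hE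
    · show MeasurableSet (Aᶜ ∩ T)
      have h' : Aᶜ ∩ T = T \ (A ∩ T) := by
        ext p; simp only [mem_inter_iff, mem_compl_iff, mem_diff]; tauto
      rw [h']
      exact hTmeas.diff hA
    · show MeasurableSet ((⋃ i, f i) ∩ T)
      rw [iUnion_inter]
      exact MeasurableSet.iUnion hf
  rwa [hET] at hEm

end Trace

section Decomp

variable [MeasurableSpace Y] [BorelSpace Y]

lemma exists_max_separable (ν : Measure Y) [IsFiniteMeasure ν] :
    ∃ S : Set Y, MeasurableSet S ∧ IsSeparable S ∧
      ∀ B : Set Y, IsSeparable B → ν (B \ S) = 0 := by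
  set σ := ⨆ (B : Set Y) (_ : IsSeparable B ∧ MeasurableSet B), ν B with hσ
  have hσfin : σ ≠ ⊤ := by
    refine ne_of_lt (lt_of_le_of_lt ?_ (measure_lt_top ν univ))
    exact iSup_le fun B => iSup_le fun _ => measure_mono (subset_univ B)
  have hch : ∀ k : ℕ, ∃ B : Set Y,
      (IsSeparable B ∧ MeasurableSet B) ∧ σ - ((k : ℝ≥0∞) + 1)⁻¹ ≤ ν B := by
    intro k
    rcases eq_or_ne σ 0 with hσ0 | hσ0
    · exact ⟨∅, ⟨Set.countable_empty.isSeparable, MeasurableSet.empty⟩, by simp [hσ0, zero_tsub]⟩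
    · have hlt : σ - ((k : ℝ≥0∞) + 1)⁻¹ < σ :=
        ENNReal.sub_lt_self hσfin hσ0 (by simp)
      rw [hσ] at hlt
      obtain ⟨B, hB⟩ := lt_iSup_iff.1 hlt
      obtain ⟨hP, hB2⟩ := lt_iSup_iff.1 hB
      exact ⟨B, hP, hB2.le⟩
  choose Bs hBs1 hBs2 using hch
  set S : Set Y := ⋃ k, closure (Bs k) with hSdef
  have hSmeas : MeasurableSet S := MeasurableSet.iUnion fun k => isClosed_closure.measurableSet
  have hSsep : IsSeparable S := IsSeparable.iUnion fun k => (hBs1 k).1.closure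
  refine ⟨S, hSmeas, hSsep, ?_⟩
  have hνS : σ ≤ ν S := by
    refine ENNReal.le_of_forall_pos_le_add fun ε hε hfin => ?_
    obtain ⟨k, hk⟩ := ENNReal.exists_inv_nat_lt (show (ε : ℝ≥0∞) ≠ 0 by
      simpa using (ne_of_gt hε))
    have h1 : σ - ((k : ℝ≥0∞) + 1)⁻¹ ≤ ν S := by
      refine (hBs2 k).trans (le_trans (measure_mono subset_closure) ?_)
      exact measure_mono (subset_iUnion (fun k => closure (Bs k)) k)
    have h2 : ((k : ℝ≥0∞) + 1)⁻¹ ≤ ε := by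
      refine le_trans ?_ hk.le
      exact ENNReal.inv_le_inv.2 (by
        exact_mod_cast Nat.le_succ k)
    calc σ ≤ ν S + ((k : ℝ≥0∞) + 1)⁻¹ := by
          rw [← tsub_le_iff_right]; exact h1
    _ ≤ ν S + ε := add_le_add_right h2 _
  intro B hB
  have hBC : IsSeparable (closure B ∪ S) ∧ MeasurableSet (closure B ∪ S) :=
    ⟨hB.closure.union hSsep, isClosed_closure.measurableSet.union hSmeas⟩
  have h1 : ν (closure B ∪ S) ≤ σ := le_iSup_of_le (closure B ∪ S) (le_iSup_of_le hBC le_rfl)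
  have h2 : ν (B \ S) ≤ ν ((closure B ∪ S) \ S) :=
    measure_mono (diff_subset_diff_left (subset_closure.trans subset_union_left))
  have h3 : ν ((closure B ∪ S) \ S) = ν (closure B ∪ S) - ν S :=
    measure_diff subset_union_right hSmeas.nullMeasurableSet (measure_ne_top ν S)
  refine le_antisymm ?_ zero_le
  calc ν (B \ S) ≤ ν (closure B ∪ S) - ν S := h3 ▸ h2
  _ ≤ σ - σ := tsub_le_tsub h1 hνS
  _ = 0 := tsub_self σ

end Decomp

section Fubini

variable [MeasurableSpace X] [MeasurableSpace Y]

lemma fubini_pos (μ : Measure X) (ν : Measure Y) [SFinite ν] {E' : Set (X × Y)}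
    (hE' : MeasurableSet E') (h : μ.prod ν E' ≠ 0) :
    μ {x | ν (Prod.mk x ⁻¹' E') ≠ 0} ≠ 0 := by
  intro h0
  apply h
  rw [Measure.prod_apply hE']
  rw [lintegral_eq_zero_iff (measurable_measure_prodMk_left hE')]
  rw [Filter.EventuallyEq, ae_iff]
  simpa using h0

end Fubini

end ZAux6
namespace ZMain
open Filter MeasureTheory Set ZPaper ZAux ZAux2 ZAux3 ZAux4 ZAux5 ZAux6 TopologicalSpace
open scoped ENNReal NNReal Topology

variable {X : Type*} [MetricSpace X] [MeasurableSpace X] [BorelSpace X]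
  {Y : Type*} [MetricSpace Y] [MeasurableSpace Y] [BorelSpace Y]

lemma sect_eq_preimage (E : Set (X × Y)) (x : X) : sect E x = Prod.mk x ⁻¹' E := rfl

lemma main_core (μ : Measure X) (ν : Measure Y) [IsFiniteMeasure μ] [IsFiniteMeasure ν]
    {t : ℝ} (ht : (t : EReal) < lpdimM ν) {E : Set (X × Y)}
    (hE : MeasurableSet[borel (X × Y)] E) (hpos : μ.prod ν E ≠ 0) (A : ℕ → Set (X × Y))
    (hA : E ⊆ ⋃ n, A n) :
    ((updimM μ + (t : EReal) ≤ ⨆ n, ubdim (A n)) ∧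
     (lpdimM μ + (t : EReal) ≤ ⨆ n, lbdim (A n))) := by
  obtain ⟨Sstar, hSmeas, hSsep, hSmax⟩ := exists_max_separable ν
  set T : Set (X × Y) := Set.univ ×ˢ Sstar with hTdef
  have hTborel : MeasurableSet[borel (X × Y)] T :=
    borel_prod_snd (by rw [← BorelSpace.measurable_eq]; exact hSmeas)
  rcases eq_or_ne (μ.prod ν (E ∩ T)) 0 with hcase | hcase
  · -- nonseparable case : some A n is not separable, both sups are ⊤
    have hE'' : μ.prod ν (E \ T) ≠ 0 := by
      intro h0
      apply hpos
      have hsplit : E ⊆ (E ∩ T) ∪ (E \ T) := by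
        intro p hp
        by_cases hpT : p ∈ T
        · exact Or.inl ⟨hp, hpT⟩
        · exact Or.inr ⟨hp, hpT⟩
      exact measure_mono_null hsplit (measure_union_null hcase h0)
    have hnotsep : ¬ IsSeparable (E \ T) := by
      intro hsep
      apply hE''
      set C := closure (Prod.snd '' (E \ T)) with hCdef
      have hCsep : IsSeparable C := (hsep.image continuous_snd).closure
      have hsub : E \ T ⊆ Set.univ ×ˢ C :=
        fun p hp => ⟨trivial, subset_closure (mem_image_of_mem _ hp)⟩
      have hborel : MeasurableSet[borel (X × Y)] (E \ T) := hE.diff hTborel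
      have hprodmeas : MeasurableSet (E \ T) :=
        measurableSet_of_separable_snd hCsep hborel hsub
      rw [Measure.prod_apply hprodmeas]
      have hzero : ∀ x, ν (Prod.mk x ⁻¹' (E \ T)) = 0 := by
        intro x
        have hsec : Prod.mk x ⁻¹' (E \ T) ⊆ C \ Sstar := by
          intro y hy
          refine ⟨(hsub hy).2, fun hyS => hy.2 ⟨trivial, hyS⟩⟩
        exact measure_mono_null hsec (hSmax C hCsep)
      rw [lintegral_congr hzero, lintegral_zero]
    obtain ⟨n, hn⟩ : ∃ n, ¬ IsSeparable (A n ∩ (E \ T)) := by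
      by_contra hcon
      push_neg at hcon
      apply hnotsep
      have heq : E \ T = ⋃ n, A n ∩ (E \ T) := by
        ext p
        simp only [mem_iUnion, mem_inter_iff]
        exact ⟨fun hp => (mem_iUnion.1 (hA hp.1)).imp (fun n hn => ⟨hn, hp⟩),
          fun ⟨n, _, hp⟩ => hp⟩
      rw [heq]
      exact IsSeparable.iUnion hcon
    have hAn : ¬ IsSeparable (A n) := fun h => hn (h.mono inter_subset_left)
    constructor
    · have : (⊤ : EReal) ≤ ⨆ m, ubdim (A m) :=
        (ubdim_top_of_not_isSeparable hAn) ▸ le_iSup (fun m => ubdim (A m)) n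
      exact le_trans le_top this
    · have : (⊤ : EReal) ≤ ⨆ m, lbdim (A m) :=
        (lbdim_top_of_not_isSeparable hAn) ▸ le_iSup (fun m => lbdim (A m)) n
      exact le_trans le_top this
  · -- main separable case
    set E' := E ∩ T with hE'def
    have hE'borel : MeasurableSet[borel (X × Y)] E' := hE.inter hTborel
    have hE'prod : MeasurableSet E' :=
      measurableSet_of_separable_snd hSsep hE'borel inter_subset_right
    have hWpos : μ {x | ν (Prod.mk x ⁻¹' E') ≠ 0} ≠ 0 := fubini_pos μ ν hE'prod hcase
    set W := {x | ν (Prod.mk x ⁻¹' E') ≠ 0} with hWdef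
    have hWsub : W ⊆ ⋃ n, {x ∈ W | (t : EReal) < lbdim (sect (A n) x)} := by
      intro x hx
      have hsec_meas : MeasurableSet[borel Y] (Prod.mk x ⁻¹' E') := by
        rw [← BorelSpace.measurable_eq]
        exact measurable_prodMk_left hE'prod
      have hlp : lpdimM ν ≤ lpdim (Prod.mk x ⁻¹' E') :=
        iInf_le_of_le _ (iInf_le_of_le ⟨hsec_meas, pos_iff_ne_zero.2 hx⟩ le_rfl)
      have hcover : Prod.mk x ⁻¹' E' ⊆ ⋃ n, sect (A n) x := by
        intro y hy
        have : (x, y) ∈ E := hy.1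
        obtain ⟨n, hn⟩ := mem_iUnion.1 (hA this)
        exact mem_iUnion.2 ⟨n, hn⟩
      have hlp2 : lpdim (Prod.mk x ⁻¹' E') ≤ ⨆ n, lbdim (sect (A n) x) :=
        lpdim_le_of_cover hcover
      have hfin : (t : EReal) < ⨆ n, lbdim (sect (A n) x) :=
        lt_of_lt_of_le ht (hlp.trans hlp2)
      obtain ⟨n, hn⟩ := lt_iSup_iff.1 hfin
      exact mem_iUnion.2 ⟨n, hx, hn⟩
    obtain ⟨n, hn⟩ : ∃ n, μ {x ∈ W | (t : EReal) < lbdim (sect (A n) x)} ≠ 0 := by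
      by_contra hcon
      push_neg at hcon
      exact hWpos (measure_mono_null hWsub (measure_iUnion_null hcon))
    constructor
    · calc updimM μ + (t : EReal)
          ≤ updim {x ∈ W | (t : EReal) < lbdim (sect (A n) x)} + (t : EReal) :=
            add_le_add_left (updimM_le_of_ne_zero μ hn) _
      _ ≤ ubdim (A n) := key_ub (fun x hx => hx.2)
      _ ≤ ⨆ m, ubdim (A m) := le_iSup (fun m => ubdim (A m)) n
    · calc lpdimM μ + (t : EReal)
          ≤ lpdim {x ∈ W | (t : EReal) < lbdim (sect (A n) x)} + (t : EReal) :=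
            add_le_add_left (lpdimM_le_of_ne_zero μ hn) _
      _ ≤ lbdim (A n) := key_lb (fun x hx => hx.2)
      _ ≤ ⨆ m, lbdim (A m) := le_iSup (fun m => lbdim (A m)) n

end ZMain

/-- For finite Borel measures `μ`, `ν` on metric spaces `X`, `Y`:
(i) `updim (μ × ν) ≥ updim μ + lpdim ν`; (ii) `lpdim (μ × ν) ≥ lpdim μ + lpdim ν`. -/
theorem stmt18 {X Y : Type*} [MetricSpace X] [MeasurableSpace X] [BorelSpace X]
    [MetricSpace Y] [MeasurableSpace Y] [BorelSpace Y]
    (μ : Measure X) (ν : Measure Y) [IsFiniteMeasure μ] [IsFiniteMeasure ν] :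
    (updimM (μ.prod ν) ≥ updimM μ + lpdimM ν) ∧
    (lpdimM (μ.prod ν) ≥ lpdimM μ + lpdimM ν) := by
  constructor
  · show updimM μ + lpdimM ν ≤ updimM (μ.prod ν)
    refine le_iInf fun E => le_iInf fun hE => ?_
    refine ZAux4.add_le_of_forall_real_lt fun t ht => ?_
    exact le_iInf fun A => le_iInf fun hA =>
      (ZMain.main_core μ ν ht hE.1 hE.2.ne' A hA).1
  · show lpdimM μ + lpdimM ν ≤ lpdimM (μ.prod ν)
    refine le_iInf fun E => le_iInf fun hE => ?_
    refine ZAux4.add_le_of_forall_real_lt fun t ht => ?_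
    exact le_iInf fun A => le_iInf fun hA =>
      (ZMain.main_core μ ν ht hE.1 hE.2.ne' A hA).2
end
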